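/- arXiv:1510.07557 — 3 statements merged into one kernel-verified Lean document; each statement's English description precedes it below -/
import Mathlib

section
/- For any partition a = x₁ < ⋯ < xₙ = b and any interpolation data y₁,…,yₙ ∈ ℝ, there exists a cubic Hermite spline γ* ∈ Her(x) with γ*(xᵢ) = yᵢ for all i minimizing ∫_a^b |γ''(x)| dx over all γ ∈ Her(x) satisfying γ(xᵢ) = yᵢ for all i. -/
open Set MeasureTheory Filter Polynomial Topology

noncomputable section

/-- A function is a cubic polynomial on a set. -/
def IsCubicOn (γ : ℝ → ℝ) (s : Set ℝ) : Prop :=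
  ∃ p : Polynomial ℝ, p.natDegree ≤ 3 ∧ ∀ t ∈ s, γ t = p.eval t

/-- `γ` is a C¹ cubic Hermite spline on `[x 0, x n]` with nodes `x 0 < ⋯ < x n`. -/
def IsHermiteSpline {n : ℕ} (x : Fin (n + 1) → ℝ) (γ : ℝ → ℝ) : Prop :=
  ContDiffOn ℝ 1 γ (Set.Icc (x 0) (x (Fin.last n))) ∧
    ∀ i : Fin n, IsCubicOn γ (Set.Icc (x i.castSucc) (x i.succ))

/-- The L¹ norm of the second derivative of `γ` over `[x 0, x n]`. -/
def L1E {n : ℕ} (x : Fin (n + 1) → ℝ) (γ : ℝ → ℝ) : ℝ :=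
  ∫ t in (x 0)..(x (Fin.last n)), |deriv (deriv γ) t|

/-- `F_x`: union over all nodal data `y` of the minimizers of `∫|γ''|` among
splines interpolating `y`; equivalently, the splines that minimize `∫|γ''|`
among all splines with the same nodal values. -/
def Fx {n : ℕ} (x : Fin (n + 1) → ℝ) : Set (ℝ → ℝ) :=
  {γ | IsHermiteSpline x γ ∧
    ∀ δ, IsHermiteSpline x δ → (∀ i, δ (x i) = γ (x i)) → L1E x γ ≤ L1E x δ}


section AuxHermite

def herm (a b ya yb da db : ℝ) : Polynomial ℝ :=
  C ya + C da * (X - C a)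
    + C ((3*(yb - ya) - (2*da + db)*(b - a))/(b - a)^2) * (X - C a)^2
    + C (((da + db)*(b - a) - 2*(yb - ya))/(b - a)^3) * (X - C a)^3

lemma herm_natDegree (a b ya yb da db : ℝ) : (herm a b ya yb da db).natDegree ≤ 3 := by
  unfold herm
  compute_degree

lemma herm_eval (a b ya yb da db t : ℝ) :
    (herm a b ya yb da db).eval t =
      ya + da*(t - a) + ((3*(yb - ya) - (2*da + db)*(b - a))/(b - a)^2)*(t - a)^2
        + (((da + db)*(b - a) - 2*(yb - ya))/(b - a)^3)*(t - a)^3 := by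
  simp [herm]

lemma herm_deriv_eval (a b ya yb da db t : ℝ) :
    (herm a b ya yb da db).derivative.eval t =
      da + 2*((3*(yb - ya) - (2*da + db)*(b - a))/(b - a)^2)*(t - a)
        + 3*(((da + db)*(b - a) - 2*(yb - ya))/(b - a)^3)*(t - a)^2 := by
  unfold herm
  simp [Polynomial.derivative_pow]
  ring

lemma herm_deriv2_eval (a b ya yb da db t : ℝ) :
    (herm a b ya yb da db).derivative.derivative.eval t =
      2*((3*(yb - ya) - (2*da + db)*(b - a))/(b - a)^2)
        + 6*(((da + db)*(b - a) - 2*(yb - ya))/(b - a)^3)*(t - a) := by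
  unfold herm
  simp [Polynomial.derivative_pow]
  ring

lemma herm_eval_a (a b ya yb da db : ℝ) : (herm a b ya yb da db).eval a = ya := by
  simp [herm_eval]

lemma herm_eval_b {a b : ℝ} (hab : a ≠ b) (ya yb da db : ℝ) :
    (herm a b ya yb da db).eval b = yb := by
  have h : b - a ≠ 0 := sub_ne_zero.2 (Ne.symm hab)
  rw [herm_eval]
  field_simp
  ring

lemma herm_deriv_eval_a (a b ya yb da db : ℝ) :
    (herm a b ya yb da db).derivative.eval a = da := by
  simp [herm_deriv_eval]

lemma herm_deriv_eval_b {a b : ℝ} (hab : a ≠ b) (ya yb da db : ℝ) :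
    (herm a b ya yb da db).derivative.eval b = db := by
  have h : b - a ≠ 0 := sub_ne_zero.2 (Ne.symm hab)
  rw [herm_deriv_eval]
  field_simp
  ring

end AuxHermite

section AuxUnique

lemma quad_zero {q : Polynomial ℝ} (hq : q.natDegree ≤ 2) {a b : ℝ} (hab : a < b)
    (ea : q.eval a = 0) (eb : q.eval b = 0)
    (eint : (∫ t in a..b, q.eval t) = 0) : q = 0 := by
  have hlt : q.natDegree < 3 := lt_of_le_of_lt hq (by norm_num)
  set c0 := q.coeff 0
  set c1 := q.coeff 1
  set c2 := q.coeff 2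
  have heval : ∀ t : ℝ, q.eval t = c0 + c1 * t + c2 * t ^ 2 := by
    intro t
    rw [Polynomial.eval_eq_sum_range' hlt]
    simp [Finset.sum_range_succ]
    rfl
  have e1 : c0 + c1 * a + c2 * a ^ 2 = 0 := by rw [← heval]; exact ea
  have e2 : c0 + c1 * b + c2 * b ^ 2 = 0 := by rw [← heval]; exact eb
  have hba : b - a ≠ 0 := sub_ne_zero.2 (ne_of_gt hab)
  have e3 : c0 * (b - a) + c1 * (b ^ 2 - a ^ 2) / 2 + c2 * (b ^ 3 - a ^ 3) / 3 = 0 := by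
    have h1 : Continuous fun t : ℝ => q.eval t := q.continuous
    have : (∫ t in a..b, q.eval t) =
        ∫ t in a..b, (c0 + c1 * t + c2 * t ^ 2) := by
      apply intervalIntegral.integral_congr
      intro t _
      exact heval t
    rw [this] at eint
    have h2 : (∫ t in a..b, (c0 + c1 * t + c2 * t ^ 2))
        = c0 * (b - a) + c1 * (b ^ 2 - a ^ 2) / 2 + c2 * (b ^ 3 - a ^ 3) / 3 := by
      have i1 : IntervalIntegrable (fun t : ℝ => c0) MeasureTheory.volume a b :=
        (continuous_const).intervalIntegrable a b
      have i2 : IntervalIntegrable (fun t : ℝ => c1 * t) MeasureTheory.volume a b :=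
        (continuous_const.mul continuous_id).intervalIntegrable a b
      have i3 : IntervalIntegrable (fun t : ℝ => c2 * t ^ 2) MeasureTheory.volume a b :=
        (continuous_const.mul (continuous_pow 2)).intervalIntegrable a b
      rw [intervalIntegral.integral_add (i1.add i2) i3, intervalIntegral.integral_add i1 i2,
        intervalIntegral.integral_const, intervalIntegral.integral_const_mul,
        intervalIntegral.integral_const_mul]
      simp
      push_cast
      ring
    rw [h2] at eint
    exact eint
  -- solve the linear system
  have hc1m : (c1 + c2 * (a + b)) * (a - b) = 0 := by linear_combination e1 - e2
  have hc1 : c1 = -c2 * (a + b) := by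
    rcases mul_eq_zero.1 hc1m with h | h
    · linarith
    · exact absurd h (sub_ne_zero.2 (ne_of_lt hab))
  have hc0 : c0 = c2 * a * b := by linear_combination e1 - a * hc1
  have hc2m : c2 * (b - a) ^ 3 = 0 := by
    linear_combination (-6) * e3 + (6 * (b - a)) * hc0 + (3 * (b ^ 2 - a ^ 2)) * hc1
  have hc2 : c2 = 0 := by
    rcases mul_eq_zero.1 hc2m with h | h
    · exact h
    · exact absurd h (pow_ne_zero 3 hba)
  have hc1' : c1 = 0 := by rw [hc1, hc2]; ring
  have hc0' : c0 = 0 := by rw [hc0, hc2]; ring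
  apply Polynomial.funext
  intro t
  rw [heval t, hc0', hc1', hc2]
  simp

lemma cubic_deriv_zero {p : Polynomial ℝ} (hp : p.natDegree ≤ 3) {a b : ℝ} (hab : a < b)
    (ha : p.eval a = 0) (hb : p.eval b = 0)
    (hda : p.derivative.eval a = 0) (hdb : p.derivative.eval b = 0) :
    p.derivative = 0 := by
  apply quad_zero (q := p.derivative) ?_ hab hda hdb
  · have : (∫ t in a..b, p.derivative.eval t) = p.eval b - p.eval a := by
      apply intervalIntegral.integral_eq_sub_of_hasDerivAt
      · intro t _
        exact p.hasDerivAt t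
      · exact (p.derivative.continuous).intervalIntegrable a b
    rw [this, ha, hb, sub_zero]
  · calc p.derivative.natDegree ≤ p.natDegree - 1 := Polynomial.natDegree_derivative_le p
      _ ≤ 2 := by omega

/-- Uniqueness of second derivative of a cubic with given Hermite data. -/
lemma cubic_eq_herm_deriv2 {q : Polynomial ℝ} (hq : q.natDegree ≤ 3) {a b : ℝ} (hab : a < b) :
    q.derivative.derivative =
      (herm a b (q.eval a) (q.eval b) (q.derivative.eval a) (q.derivative.eval b)).derivative.derivative := by
  set H := herm a b (q.eval a) (q.eval b) (q.derivative.eval a) (q.derivative.eval b) with hH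
  have hd : (q - H).derivative = 0 := by
    apply cubic_deriv_zero ?_ hab
    · simp [hH, herm_eval_a]
    · simp [hH, herm_eval_b (ne_of_lt hab)]
    · simp [hH, herm_deriv_eval_a]
    · simp [hH, herm_deriv_eval_b (ne_of_lt hab)]
    · exact le_trans (Polynomial.natDegree_sub_le q H) (max_le hq (herm_natDegree _ _ _ _ _ _))
  have : q.derivative = H.derivative := by
    have := hd
    rwa [Polynomial.derivative_sub, sub_eq_zero] at this
  rw [this]

end AuxUnique

section AuxGlue

variable {n : ℕ}

/-- Index of the piece containing `t`. -/
def pidx (hn : 0 < n) (x : Fin (n + 1) → ℝ) (t : ℝ) : Fin n :=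
  if h : (Finset.univ.filter fun i : Fin n => x i.castSucc ≤ t).Nonempty
  then (Finset.univ.filter fun i : Fin n => x i.castSucc ≤ t).max' h else ⟨0, hn⟩

/-- The piecewise polynomial function. -/
def pw (hn : 0 < n) (x : Fin (n + 1) → ℝ) (P : Fin n → Polynomial ℝ) : ℝ → ℝ :=
  fun t => (P (pidx hn x t)).eval t

variable {hn : 0 < n} {x : Fin (n + 1) → ℝ} (hx : StrictMono x)

lemma pidx_ge {t : ℝ} {i : Fin n} (h : x i.castSucc ≤ t) : i ≤ pidx hn x t := by
  have hi : i ∈ Finset.univ.filter fun i : Fin n => x i.castSucc ≤ t := by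
    simp [h]
  rw [pidx, dif_pos ⟨i, hi⟩]
  exact Finset.le_max' _ i hi

include hx

lemma pidx_le_self {t : ℝ} (h : x 0 ≤ t) : x (pidx hn x t).castSucc ≤ t := by
  have hne : (Finset.univ.filter fun i : Fin n => x i.castSucc ≤ t).Nonempty := by
    refine ⟨⟨0, hn⟩, ?_⟩
    simp only [Finset.mem_filter, Finset.mem_univ, true_and]
    exact le_trans (hx.monotone (by simp [Fin.le_def])) h
  have hmem := Finset.max'_mem _ hne
  rw [Finset.mem_filter] at hmem
  rw [pidx, dif_pos hne]
  exact hmem.2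

lemma pidx_of_lt {t : ℝ} (h : t < x 0) : pidx hn x t = ⟨0, hn⟩ := by
  rw [pidx, dif_neg]
  rintro ⟨i, hi⟩
  rw [Finset.mem_filter] at hi
  have : x 0 ≤ x i.castSucc := hx.monotone (Fin.zero_le _)
  linarith [hi.2]

lemma pidx_eq {t : ℝ} {i : Fin n} (h1 : x i.castSucc ≤ t) (h2 : t < x i.succ) :
    pidx hn x t = i := by
  refine le_antisymm ?_ (pidx_ge h1)
  have h0 : x 0 ≤ t := le_trans (hx.monotone (Fin.zero_le _)) h1
  have := pidx_le_self hx (hn := hn) h0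
  have hlt : (pidx hn x t).castSucc < i.succ := hx.lt_iff_lt.mp (lt_of_le_of_lt this h2)
  exact Fin.castSucc_lt_succ_iff.mp hlt

lemma pidx_eq_zero {t : ℝ} (h : t < x (Fin.succ ⟨0, hn⟩)) : pidx hn x t = ⟨0, hn⟩ := by
  rcases le_or_gt (x 0) t with h0 | h0
  · apply pidx_eq hx ?_ h
    exact le_trans (hx.monotone (by simp [Fin.le_def])) h0
  · exact pidx_of_lt hx h0

omit hx in
lemma pidx_eq_last {t : ℝ} (h : x (Fin.castSucc ⟨n - 1, by omega⟩) ≤ t) :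
    pidx hn x t = ⟨n - 1, by omega⟩ := by
  refine le_antisymm ?_ (pidx_ge h)
  have := (pidx hn x t).isLt
  simp only [Fin.le_def]
  omega

/-- coverage of the real line by the interior pieces, outer rays, and breakpoints -/
lemma pw_cover (t : ℝ) :
    t < x (Fin.succ ⟨0, hn⟩) ∨ x (Fin.castSucc ⟨n - 1, by omega⟩) < t ∨
      (∃ i : Fin n, x i.castSucc < t ∧ t < x i.succ) ∨
      (∃ j : Fin n, 0 < (j : ℕ) ∧ t = x j.castSucc) := by
  by_cases h1 : t < x (Fin.succ ⟨0, hn⟩)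
  · exact Or.inl h1
  push_neg at h1
  by_cases h2 : x (Fin.castSucc ⟨n - 1, by omega⟩) < t
  · exact Or.inr (Or.inl h2)
  push_neg at h2
  right; right
  have hx0 : x 0 ≤ t := le_trans (hx.monotone (Fin.zero_le _)) h1
  set i := pidx hn x t with hi
  have hle : x i.castSucc ≤ t := pidx_le_self hx hx0
  rcases eq_or_lt_of_le hle with heq | hlt
  · right
    refine ⟨i, ?_, heq.symm⟩
    by_contra hcon
    push_neg at hcon
    have hiv : (i : ℕ) = 0 := by omega
    have hi0 : i.castSucc = (0 : Fin (n+1)) := by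
      ext; simp [hiv]
    rw [hi0] at heq
    have hlt01 : x 0 < x (Fin.succ ⟨0, hn⟩) := hx (by simp [Fin.lt_def])
    rw [heq] at hlt01
    linarith
  · left
    refine ⟨i, hlt, ?_⟩
    by_contra hcon
    push_neg at hcon
    by_cases hcase : (i : ℕ) + 1 < n
    · have hj : x ((⟨(i : ℕ) + 1, hcase⟩ : Fin n)).castSucc ≤ t := by
        have hcs : ((⟨(i : ℕ) + 1, hcase⟩ : Fin n)).castSucc = i.succ := by ext; simp
        rwa [hcs]
      have hgi := pidx_ge (hn := hn) hj
      rw [← hi] at hgi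
      simp only [Fin.le_def] at hgi
      omega
    · have hiv : (i : ℕ) = n - 1 := by have := i.isLt; omega
      have hcs : i.castSucc = Fin.castSucc ⟨n - 1, by omega⟩ := by ext; simp [hiv]
      rw [hcs] at hlt
      have hlt2 : x i.castSucc < x i.succ := hx (Fin.castSucc_lt_succ (i := i))
      rw [hcs] at hlt2
      have hfin : x i.succ ≤ x (Fin.castSucc ⟨n - 1, by omega⟩) := le_trans hcon h2
      linarith

variable {P : Fin n → Polynomial ℝ}

/-- value of pw on each piece, given value-matching at interior nodes -/
lemma pw_eq_on
    (hval : ∀ i j : Fin n, (i : ℕ) + 1 = (j : ℕ) →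
      (P i).eval (x j.castSucc) = (P j).eval (x j.castSucc))
    (i : Fin n) : ∀ t ∈ Icc (x i.castSucc) (x i.succ), pw hn x P t = (P i).eval t := by
  rintro t ⟨ht1, ht2⟩
  rcases lt_or_eq_of_le ht2 with ht2 | ht2
  · rw [pw, pidx_eq hx ht1 ht2]
  · by_cases hcase : (i : ℕ) + 1 < n
    · set j : Fin n := ⟨(i : ℕ) + 1, hcase⟩ with hj
      have hcs : j.castSucc = i.succ := by ext; simp [hj]
      have h1 : x j.castSucc ≤ t := by rw [hcs, ← ht2]
      have h2 : t < x j.succ := by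
        rw [ht2, ← hcs]; exact hx (Fin.castSucc_lt_succ (i := j))
      rw [pw, pidx_eq hx h1 h2]
      have hv := hval i j (by simp [hj])
      rw [hcs, ← ht2] at hv
      exact hv.symm
    · have hiv : (i : ℕ) = n - 1 := by have := i.isLt; omega
      have hieq : i = ⟨n - 1, by omega⟩ := by ext; simp [hiv]
      have hpi : pidx hn x t = i := by
        rw [hieq]
        exact pidx_eq_last (by rw [← hieq]; exact ht1)
      rw [pw, hpi]

lemma pw_hasDerivAt
    (hval : ∀ i j : Fin n, (i : ℕ) + 1 = (j : ℕ) →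
      (P i).eval (x j.castSucc) = (P j).eval (x j.castSucc))
    (hder : ∀ i j : Fin n, (i : ℕ) + 1 = (j : ℕ) →
      (P i).derivative.eval (x j.castSucc) = (P j).derivative.eval (x j.castSucc))
    (t : ℝ) :
    HasDerivAt (pw hn x P) ((P (pidx hn x t)).derivative.eval t) t := by
  rcases pw_cover hx t with h | h | ⟨i, hi1, hi2⟩ | ⟨j, hj0, hjt⟩
  · -- left ray
    have hev : pw hn x P =ᶠ[𝓝 t] fun s => (P ⟨0, hn⟩).eval s :=
      Filter.eventually_of_mem (Iio_mem_nhds h)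
        (fun s hs => by rw [pw, pidx_eq_zero hx hs])
    have hd := ((P ⟨0, hn⟩).hasDerivAt t).congr_of_eventuallyEq hev
    rwa [pidx_eq_zero hx h]
  · -- right ray
    have hev : pw hn x P =ᶠ[𝓝 t] fun s => (P ⟨n - 1, by omega⟩).eval s :=
      Filter.eventually_of_mem (Ioi_mem_nhds h)
        (fun s hs => by rw [pw, pidx_eq_last (le_of_lt hs)])
    have hd := ((P ⟨n - 1, by omega⟩).hasDerivAt t).congr_of_eventuallyEq hev
    rwa [pidx_eq_last (le_of_lt h)]
  · -- interior of a piece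
    have hev : pw hn x P =ᶠ[𝓝 t] fun s => (P i).eval s :=
      Filter.eventually_of_mem (isOpen_Ioo.mem_nhds ⟨hi1, hi2⟩)
        (fun s hs => by rw [pw, pidx_eq hx (le_of_lt hs.1) hs.2])
    have hd := ((P i).hasDerivAt t).congr_of_eventuallyEq hev
    rwa [pidx_eq hx (le_of_lt hi1) hi2]
  · -- breakpoint t = x j.castSucc, 0 < j
    set i : Fin n := ⟨(j : ℕ) - 1, by omega⟩ with hidef
    have hisucc : i.succ = j.castSucc := by ext; simp [hidef]; omega
    have hicast : (i.castSucc : Fin (n+1)) < j.castSucc := by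
      simp [Fin.lt_def, hidef]; omega
    have hic : x i.castSucc < t := by rw [hjt]; exact hx hicast
    have htj : t < x j.succ := by rw [hjt]; exact hx (Fin.castSucc_lt_succ (i := j))
    have hpj : pidx hn x t = j := pidx_eq hx hjt.ge htj
    have hvti : pw hn x P t = (P i).eval t :=
      pw_eq_on hx hval i t ⟨le_of_lt hic, by rw [hisucc, ← hjt]⟩
    have hvtj : pw hn x P t = (P j).eval t :=
      pw_eq_on hx hval j t ⟨hjt.ge, le_of_lt htj⟩
    have hdval : (P i).derivative.eval t = (P j).derivative.eval t := by
      rw [hjt]; exact hder i j (by simp [hidef]; omega)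
    have hleft : HasDerivWithinAt (pw hn x P) ((P j).derivative.eval t) (Iic t) t := by
      rw [← hdval]
      refine ((P i).hasDerivAt t).hasDerivWithinAt.congr_of_eventuallyEq ?_ hvti
      refine Filter.eventuallyEq_of_mem
        (Filter.inter_mem (mem_nhdsWithin_of_mem_nhds (Ioi_mem_nhds hic)) self_mem_nhdsWithin)
        (fun s hs => ?_)
      exact pw_eq_on hx hval i s ⟨le_of_lt hs.1, by rw [hisucc, ← hjt]; exact hs.2⟩
    have hright : HasDerivWithinAt (pw hn x P) ((P j).derivative.eval t) (Ici t) t := by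
      refine ((P j).hasDerivAt t).hasDerivWithinAt.congr_of_eventuallyEq ?_ hvtj
      refine Filter.eventuallyEq_of_mem
        (Filter.inter_mem (mem_nhdsWithin_of_mem_nhds (Iio_mem_nhds htj)) self_mem_nhdsWithin)
        (fun s hs => ?_)
      exact pw_eq_on hx hval j s ⟨le_trans hjt.ge hs.2, le_of_lt hs.1⟩
    have hu := hleft.union hright
    rw [Iic_union_Ici] at hu
    rw [hpj]
    exact hasDerivWithinAt_univ.mp hu

lemma pw_deriv_eq
    (hval : ∀ i j : Fin n, (i : ℕ) + 1 = (j : ℕ) →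
      (P i).eval (x j.castSucc) = (P j).eval (x j.castSucc))
    (hder : ∀ i j : Fin n, (i : ℕ) + 1 = (j : ℕ) →
      (P i).derivative.eval (x j.castSucc) = (P j).derivative.eval (x j.castSucc)) :
    deriv (pw hn x P) = pw hn x (fun i => (P i).derivative) :=
  funext fun t => (pw_hasDerivAt hx hval hder t).deriv

lemma pw_continuous
    (hval : ∀ i j : Fin n, (i : ℕ) + 1 = (j : ℕ) →
      (P i).eval (x j.castSucc) = (P j).eval (x j.castSucc)) :
    Continuous (pw hn x P) := by
  rw [continuous_iff_continuousAt]
  intro t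
  rcases pw_cover hx t with h | h | ⟨i, hi1, hi2⟩ | ⟨j, hj0, hjt⟩
  · have hev : pw hn x P =ᶠ[𝓝 t] fun s => (P ⟨0, hn⟩).eval s :=
      Filter.eventually_of_mem (Iio_mem_nhds h)
        (fun s hs => by rw [pw, pidx_eq_zero hx hs])
    exact ((P ⟨0, hn⟩).continuous.continuousAt).congr hev.symm
  · have hev : pw hn x P =ᶠ[𝓝 t] fun s => (P ⟨n - 1, by omega⟩).eval s :=
      Filter.eventually_of_mem (Ioi_mem_nhds h)
        (fun s hs => by rw [pw, pidx_eq_last (le_of_lt hs)])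
    exact ((P ⟨n - 1, by omega⟩).continuous.continuousAt).congr hev.symm
  · have hev : pw hn x P =ᶠ[𝓝 t] fun s => (P i).eval s :=
      Filter.eventually_of_mem (isOpen_Ioo.mem_nhds ⟨hi1, hi2⟩)
        (fun s hs => by rw [pw, pidx_eq hx (le_of_lt hs.1) hs.2])
    exact ((P i).continuous.continuousAt).congr hev.symm
  · set i : Fin n := ⟨(j : ℕ) - 1, by omega⟩ with hidef
    have hisucc : i.succ = j.castSucc := by ext; simp [hidef]; omega
    have hicast : (i.castSucc : Fin (n+1)) < j.castSucc := by
      simp [Fin.lt_def, hidef]; omega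
    have hic : x i.castSucc < t := by rw [hjt]; exact hx hicast
    have htj : t < x j.succ := by rw [hjt]; exact hx (Fin.castSucc_lt_succ (i := j))
    have hvti : pw hn x P t = (P i).eval t :=
      pw_eq_on hx hval i t ⟨le_of_lt hic, by rw [hisucc, ← hjt]⟩
    have hvtj : pw hn x P t = (P j).eval t :=
      pw_eq_on hx hval j t ⟨hjt.ge, le_of_lt htj⟩
    have hleft : ContinuousWithinAt (pw hn x P) (Iic t) t := by
      refine ((P i).continuous.continuousAt.continuousWithinAt).congr_of_eventuallyEq ?_ hvti
      refine Filter.eventuallyEq_of_mem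
        (Filter.inter_mem (mem_nhdsWithin_of_mem_nhds (Ioi_mem_nhds hic)) self_mem_nhdsWithin)
        (fun s hs => ?_)
      exact pw_eq_on hx hval i s ⟨le_of_lt hs.1, by rw [hisucc, ← hjt]; exact hs.2⟩
    have hright : ContinuousWithinAt (pw hn x P) (Ici t) t := by
      refine ((P j).continuous.continuousAt.continuousWithinAt).congr_of_eventuallyEq ?_ hvtj
      refine Filter.eventuallyEq_of_mem
        (Filter.inter_mem (mem_nhdsWithin_of_mem_nhds (Iio_mem_nhds htj)) self_mem_nhdsWithin)
        (fun s hs => ?_)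
      exact pw_eq_on hx hval j s ⟨le_trans hjt.ge hs.2, le_of_lt hs.1⟩
    have hu := hleft.union hright
    rw [Iic_union_Ici] at hu
    exact continuousWithinAt_univ _ _ |>.mp hu

lemma pw_contDiff
    (hval : ∀ i j : Fin n, (i : ℕ) + 1 = (j : ℕ) →
      (P i).eval (x j.castSucc) = (P j).eval (x j.castSucc))
    (hder : ∀ i j : Fin n, (i : ℕ) + 1 = (j : ℕ) →
      (P i).derivative.eval (x j.castSucc) = (P j).derivative.eval (x j.castSucc)) :
    ContDiff ℝ 1 (pw hn x P) := by
  rw [contDiff_one_iff_deriv]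
  constructor
  · exact fun t => (pw_hasDerivAt hx hval hder t).differentiableAt
  · rw [pw_deriv_eq hx hval hder]
    exact pw_continuous hx hder

/-- The L¹ energy of a piecewise-polynomial function equals the sum of piece energies. -/
lemma energy_eq {γ : ℝ → ℝ} {Q : Fin n → Polynomial ℝ}
    (hpieces : ∀ i : Fin n, ∀ t ∈ Icc (x i.castSucc) (x i.succ), γ t = (Q i).eval t) :
    (∫ t in (x 0)..(x (Fin.last n)), |deriv (deriv γ) t|)
      = ∑ i : Fin n, ∫ t in (x i.castSucc)..(x i.succ),
          |(Q i).derivative.derivative.eval t| := by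
  have key2 : ∀ i : Fin n, ∀ t ∈ Ioo (x i.castSucc) (x i.succ),
      deriv (deriv γ) t = (Q i).derivative.derivative.eval t := by
    intro i
    have h1 : ∀ t ∈ Ioo (x i.castSucc) (x i.succ), deriv γ t = (Q i).derivative.eval t := by
      intro t ht
      have hev : γ =ᶠ[𝓝 t] fun s => (Q i).eval s :=
        Filter.eventually_of_mem (isOpen_Ioo.mem_nhds ht)
          (fun s hs => hpieces i s (Ioo_subset_Icc_self hs))
      rw [hev.deriv_eq]
      exact Polynomial.deriv (p := Q i)
    intro t ht
    have hev2 : deriv γ =ᶠ[𝓝 t] fun s => (Q i).derivative.eval s :=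
      Filter.eventually_of_mem (isOpen_Ioo.mem_nhds ht) (fun s hs => h1 s hs)
    rw [hev2.deriv_eq]
    exact Polynomial.deriv (p := (Q i).derivative)
  have hle : ∀ i : Fin n, x i.castSucc ≤ x i.succ :=
    fun i => le_of_lt (hx (Fin.castSucc_lt_succ (i := i)))
  have haene : ∀ i : Fin n, ∀ᵐ s ∂(volume : Measure ℝ), s ≠ x i.succ := by
    intro i
    refine (MeasureTheory.ae_iff).2 ?_
    have hset : {s : ℝ | ¬ s ≠ x i.succ} = {x i.succ} := by ext s; simp
    rw [hset]
    exact measure_singleton _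
  have hint : ∀ i : Fin n, (∫ t in (x i.castSucc)..(x i.succ), |deriv (deriv γ) t|)
      = ∫ t in (x i.castSucc)..(x i.succ), |(Q i).derivative.derivative.eval t| := by
    intro i
    apply intervalIntegral.integral_congr_ae
    filter_upwards [haene i] with s hs hmem
    rw [uIoc_of_le (hle i)] at hmem
    have hsoo : s ∈ Ioo (x i.castSucc) (x i.succ) := ⟨hmem.1, lt_of_le_of_ne hmem.2 hs⟩
    rw [key2 i s hsoo]
  have hintg : ∀ i : Fin n,
      IntervalIntegrable (fun t => |deriv (deriv γ) t|) volume (x i.castSucc) (x i.succ) := by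
    intro i
    have hcont : Continuous fun t => |(Q i).derivative.derivative.eval t| :=
      ((Q i).derivative.derivative.continuous).abs
    rw [intervalIntegrable_iff_integrableOn_Ioc_of_le (hle i)]
    refine (hcont.integrableOn_Ioc).congr ?_
    rw [Filter.EventuallyEq, MeasureTheory.ae_restrict_iff' measurableSet_Ioc]
    filter_upwards [haene i] with s hs hmem
    have hsoo : s ∈ Ioo (x i.castSucc) (x i.succ) := ⟨hmem.1, lt_of_le_of_ne hmem.2 hs⟩
    rw [key2 i s hsoo]
  set z : ℕ → ℝ := fun k => if h : k ≤ n then x ⟨k, by omega⟩ else x (Fin.last n) with hz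
  have hzk : ∀ (k : ℕ) (hk : k < n),
      z k = x ((⟨k, hk⟩ : Fin n)).castSucc ∧ z (k + 1) = x ((⟨k, hk⟩ : Fin n)).succ := by
    intro k hk
    constructor
    · rw [hz]; simp only []; rw [dif_pos (by omega : k ≤ n)]
      exact congrArg x (by ext; simp)
    · rw [hz]; simp only []; rw [dif_pos (by omega : k + 1 ≤ n)]
      exact congrArg x (by ext; simp)
  have hz0 : z 0 = x 0 := by
    rw [hz]; simp only []; rw [dif_pos (by omega : 0 ≤ n)]
    exact congrArg x (by ext; simp)
  have hzn : z n = x (Fin.last n) := by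
    rw [hz]; simp only []; rw [dif_pos (le_refl n)]
    exact congrArg x (by ext; simp [Fin.last])
  have hsum := intervalIntegral.sum_integral_adjacent_intervals
    (f := fun t => |deriv (deriv γ) t|) (a := z) (μ := volume) (n := n) ?_
  · rw [hz0, hzn] at hsum
    rw [← hsum, ← Fin.sum_univ_eq_sum_range
      (fun k => ∫ t in z k..z (k + 1), |deriv (deriv γ) t|) n]
    apply Finset.sum_congr rfl
    intro i _
    have hk := hzk i.val i.isLt
    have : (⟨i.val, i.isLt⟩ : Fin n) = i := by ext; rfl
    rw [this] at hk
    rw [hk.1, hk.2, hint i]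
  · intro k hk
    have hzz := hzk k hk
    rw [hzz.1, hzz.2]
    exact hintg _

end AuxGlue

section AuxBounds

lemma ibp_left {p : Polynomial ℝ} {a b : ℝ} (hab : a < b) :
    (∫ t in a..b, (b - t) * p.derivative.derivative.eval t)
      = p.eval b - p.eval a - (b - a) * p.derivative.eval a := by
  have hG : ∀ t : ℝ, HasDerivAt (fun s => (b - s) * p.derivative.eval s + p.eval s)
      ((b - t) * p.derivative.derivative.eval t) t := by
    intro t
    have h1 : HasDerivAt (fun s : ℝ => b - s) (-1) t := (hasDerivAt_id t).const_sub b
    have h3 := (h1.mul (p.derivative.hasDerivAt t)).add (p.hasDerivAt t)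
    refine HasDerivAt.congr_deriv h3 ?_
    ring
  have hcont : Continuous fun t : ℝ => (b - t) * p.derivative.derivative.eval t :=
    (continuous_const.sub continuous_id).mul p.derivative.derivative.continuous
  rw [intervalIntegral.integral_eq_sub_of_hasDerivAt (fun t _ => hG t)
    (hcont.intervalIntegrable a b)]
  simp
  ring

lemma ibp_right {p : Polynomial ℝ} {a b : ℝ} (hab : a < b) :
    (∫ t in a..b, (t - a) * p.derivative.derivative.eval t)
      = (b - a) * p.derivative.eval b - (p.eval b - p.eval a) := by
  have hG : ∀ t : ℝ, HasDerivAt (fun s => (s - a) * p.derivative.eval s - p.eval s)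
      ((t - a) * p.derivative.derivative.eval t) t := by
    intro t
    have h1 : HasDerivAt (fun s : ℝ => s - a) 1 t := (hasDerivAt_id t).sub_const a
    have h3 := (h1.mul (p.derivative.hasDerivAt t)).sub (p.hasDerivAt t)
    refine HasDerivAt.congr_deriv h3 ?_
    ring
  have hcont : Continuous fun t : ℝ => (t - a) * p.derivative.derivative.eval t :=
    (continuous_id.sub continuous_const).mul p.derivative.derivative.continuous
  rw [intervalIntegral.integral_eq_sub_of_hasDerivAt (fun t _ => hG t)
    (hcont.intervalIntegrable a b)]
  simp
  ring

lemma weight_bound {p : Polynomial ℝ} {a b : ℝ} (hab : a < b)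
    (w : ℝ → ℝ) (hwc : Continuous w) (hw : ∀ t ∈ Icc a b, |w t| ≤ b - a) :
    |∫ t in a..b, w t * p.derivative.derivative.eval t|
      ≤ (b - a) * ∫ t in a..b, |p.derivative.derivative.eval t| := by
  have h1 : |∫ t in a..b, w t * p.derivative.derivative.eval t|
      ≤ ∫ t in a..b, |w t * p.derivative.derivative.eval t| :=
    intervalIntegral.abs_integral_le_integral_abs hab.le
  have h2 : (∫ t in a..b, |w t * p.derivative.derivative.eval t|)
      ≤ ∫ t in a..b, (b - a) * |p.derivative.derivative.eval t| := by
    apply intervalIntegral.integral_mono_on hab.le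
    · exact ((hwc.mul p.derivative.derivative.continuous).abs).intervalIntegrable a b
    · exact (continuous_const.mul p.derivative.derivative.continuous.abs).intervalIntegrable a b
    · intro t ht
      rw [abs_mul]
      apply mul_le_mul_of_nonneg_right (hw t ht) (abs_nonneg _)
  rw [intervalIntegral.integral_const_mul] at h2
  linarith

/-- lower bound for left endpoint derivative -/
lemma deriv_bound_left {p : Polynomial ℝ} {a b : ℝ} (hab : a < b) :
    |p.derivative.eval a| ≤ |p.eval b - p.eval a| / (b - a)
      + ∫ t in a..b, |p.derivative.derivative.eval t| := by
  have hw : ∀ t ∈ Icc a b, |(fun s : ℝ => b - s) t| ≤ b - a := by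
    intro t ht
    rw [abs_of_nonneg (by linarith [ht.2] : (0:ℝ) ≤ b - t)]
    linarith [ht.1]
  have hb := weight_bound (p := p) hab (fun s => b - s) (by fun_prop) hw
  rw [ibp_left hab] at hb
  have hpos : (0:ℝ) < b - a := by linarith
  have htri : (b - a) * |p.derivative.eval a| - |p.eval b - p.eval a|
      ≤ |p.eval b - p.eval a - (b - a) * p.derivative.eval a| := by
    have := abs_sub_abs_le_abs_sub ((b - a) * p.derivative.eval a) (p.eval b - p.eval a)
    rw [abs_mul, abs_of_pos hpos] at this
    calc (b - a) * |p.derivative.eval a| - |p.eval b - p.eval a|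
        ≤ |(b - a) * p.derivative.eval a - (p.eval b - p.eval a)| := this
      _ = |p.eval b - p.eval a - (b - a) * p.derivative.eval a| := by rw [abs_sub_comm]
  have key : (b - a) * |p.derivative.eval a|
      ≤ |p.eval b - p.eval a| + (b - a) * ∫ t in a..b, |p.derivative.derivative.eval t| := by
    linarith
  rw [div_add' _ _ _ (ne_of_gt hpos), le_div_iff₀ hpos]
  nlinarith [key]

/-- lower bound for right endpoint derivative -/
lemma deriv_bound_right {p : Polynomial ℝ} {a b : ℝ} (hab : a < b) :
    |p.derivative.eval b| ≤ |p.eval b - p.eval a| / (b - a)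
      + ∫ t in a..b, |p.derivative.derivative.eval t| := by
  have hw : ∀ t ∈ Icc a b, |(fun s : ℝ => s - a) t| ≤ b - a := by
    intro t ht
    rw [abs_of_nonneg (by linarith [ht.1] : (0:ℝ) ≤ t - a)]
    linarith [ht.2]
  have hb := weight_bound (p := p) hab (fun s => s - a) (by fun_prop) hw
  rw [ibp_right hab] at hb
  have hpos : (0:ℝ) < b - a := by linarith
  have htri : (b - a) * |p.derivative.eval b| - |p.eval b - p.eval a|
      ≤ |(b - a) * p.derivative.eval b - (p.eval b - p.eval a)| := by
    have := abs_sub_abs_le_abs_sub ((b - a) * p.derivative.eval b) (p.eval b - p.eval a)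
    rw [abs_mul, abs_of_pos hpos] at this
    exact this
  have key : (b - a) * |p.derivative.eval b|
      ≤ |p.eval b - p.eval a| + (b - a) * ∫ t in a..b, |p.derivative.derivative.eval t| := by
    linarith
  rw [div_add' _ _ _ (ne_of_gt hpos), le_div_iff₀ hpos]
  nlinarith [key]

end AuxBounds

section AuxEn

variable {n : ℕ}

/-- Hermite polynomial of piece `i` for data `y`, `d`. -/
def Epoly (x y d : Fin (n + 1) → ℝ) (i : Fin n) : Polynomial ℝ :=
  herm (x i.castSucc) (x i.succ) (y i.castSucc) (y i.succ) (d i.castSucc) (d i.succ)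

/-- The total energy as a function of the nodal derivatives. -/
def En (x y : Fin (n + 1) → ℝ) (d : Fin (n + 1) → ℝ) : ℝ :=
  ∑ i : Fin n, ∫ t in (x i.castSucc)..(x i.succ),
    |(Epoly x y d i).derivative.derivative.eval t|

section
variable {x : Fin (n + 1) → ℝ} (hx : StrictMono x)
include hx

lemma piece_nonneg (y d : Fin (n + 1) → ℝ) (i : Fin n) :
    0 ≤ ∫ t in (x i.castSucc)..(x i.succ), |(Epoly x y d i).derivative.derivative.eval t| :=
  intervalIntegral.integral_nonneg (le_of_lt (hx (Fin.castSucc_lt_succ (i := i))))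
    (fun t _ => abs_nonneg _)

lemma En_nonneg (y d : Fin (n + 1) → ℝ) : 0 ≤ En x y d :=
  Finset.sum_nonneg fun i _ => piece_nonneg hx y d i

lemma piece_le_En (y d : Fin (n + 1) → ℝ) (i : Fin n) :
    (∫ t in (x i.castSucc)..(x i.succ), |(Epoly x y d i).derivative.derivative.eval t|)
      ≤ En x y d :=
  Finset.single_le_sum (fun j _ => piece_nonneg hx y d j) (Finset.mem_univ i)

lemma En_continuous (y : Fin (n + 1) → ℝ) : Continuous (fun d => En x y d) := by
  apply continuous_finset_sum
  intro i _
  have h : ∀ d : Fin (n + 1) → ℝ, ∀ t : ℝ,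
      |(Epoly x y d i).derivative.derivative.eval t| =
      |2*((3*(y i.succ - y i.castSucc) - (2*(d i.castSucc) + d i.succ)*(x i.succ - x i.castSucc))
            /(x i.succ - x i.castSucc)^2)
        + 6*(((d i.castSucc + d i.succ)*(x i.succ - x i.castSucc)
            - 2*(y i.succ - y i.castSucc))/(x i.succ - x i.castSucc)^3)*(t - x i.castSucc)| := by
    intro d t
    rw [Epoly, herm_deriv2_eval]
  have heq : (fun d => ∫ t in (x i.castSucc)..(x i.succ),
      |(Epoly x y d i).derivative.derivative.eval t|)
      = fun d => ∫ t in (x i.castSucc)..(x i.succ),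
        (fun (d : Fin (n+1) → ℝ) (t : ℝ) =>
          |2*((3*(y i.succ - y i.castSucc) - (2*(d i.castSucc) + d i.succ)*(x i.succ - x i.castSucc))
            /(x i.succ - x i.castSucc)^2)
          + 6*(((d i.castSucc + d i.succ)*(x i.succ - x i.castSucc)
            - 2*(y i.succ - y i.castSucc))/(x i.succ - x i.castSucc)^3)*(t - x i.castSucc)|) d t := by
    funext d
    congr 1
    funext t
    exact h d t
  rw [heq]
  apply intervalIntegral.continuous_parametric_intervalIntegral_of_continuous'
  apply Continuous.abs
  fun_prop

omit hx in
lemma nothing : True := trivial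

end

/-- coercivity constant -/
def Cb (x y : Fin (n + 1) → ℝ) (j : Fin (n + 1)) : ℝ :=
  if h : (j : ℕ) < n then
    |y (⟨(j : ℕ), h⟩ : Fin n).succ - y j| / (x (⟨(j : ℕ), h⟩ : Fin n).succ - x j)
  else if h2 : 0 < n then
    |y j - y (⟨n - 1, by omega⟩ : Fin n).castSucc| / (x j - x (⟨n - 1, by omega⟩ : Fin n).castSucc)
  else 0

section
variable {x : Fin (n + 1) → ℝ} (hx : StrictMono x)
include hx

lemma En_coercive (hn : 0 < n) (y d : Fin (n + 1) → ℝ) (j : Fin (n + 1)) :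
    |d j| ≤ Cb x y j + En x y d := by
  rw [Cb]
  by_cases h : (j : ℕ) < n
  · rw [dif_pos h]
    set i : Fin n := ⟨(j : ℕ), h⟩ with hi
    have hcs : i.castSucc = j := by ext; simp [hi]
    have hab : x i.castSucc < x i.succ := hx (Fin.castSucc_lt_succ (i := i))
    have hb := deriv_bound_left (p := Epoly x y d i) hab
    rw [Epoly, herm_deriv_eval_a, herm_eval_a, herm_eval_b (ne_of_lt hab)] at hb
    rw [← hcs]
    calc |d i.castSucc| ≤ |y i.succ - y i.castSucc| / (x i.succ - x i.castSucc)
          + ∫ t in (x i.castSucc)..(x i.succ), |(Epoly x y d i).derivative.derivative.eval t| := hb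
      _ ≤ _ := by
          have := piece_le_En hx y d i
          gcongr
  · rw [dif_neg h]
    have h2 : 0 < n := hn
    rw [dif_pos h2]
    set i : Fin n := ⟨n - 1, by omega⟩ with hi
    have h3 : (j : ℕ) = n := by have := j.isLt; omega
    have hcs : i.succ = j := by
      apply Fin.ext
      rw [Fin.val_succ, h3]
      simp only [hi]
      omega
    have hab : x i.castSucc < x i.succ := hx (Fin.castSucc_lt_succ (i := i))
    have hb := deriv_bound_right (p := Epoly x y d i) hab
    rw [Epoly, herm_deriv_eval_b (ne_of_lt hab), herm_eval_a, herm_eval_b (ne_of_lt hab)] at hb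
    rw [← hcs]
    calc |d i.succ| ≤ |y i.succ - y i.castSucc| / (x i.succ - x i.castSucc)
          + ∫ t in (x i.castSucc)..(x i.succ), |(Epoly x y d i).derivative.derivative.eval t| := hb
      _ ≤ _ := by
          have := piece_le_En hx y d i
          gcongr

lemma En_min (hn : 0 < n) (y : Fin (n + 1) → ℝ) :
    ∃ dstar : Fin (n + 1) → ℝ, ∀ d, En x y dstar ≤ En x y d := by
  set R : ℝ := (∑ j, |Cb x y j|) + En x y 0 with hR
  have hR0 : 0 ≤ R := by
    apply add_nonneg
    · exact Finset.sum_nonneg fun j _ => abs_nonneg _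
    · exact En_nonneg hx y 0
  set K := Metric.closedBall (0 : Fin (n + 1) → ℝ) R with hK
  have hKc : IsCompact K := isCompact_closedBall _ _
  have h0K : (0 : Fin (n + 1) → ℝ) ∈ K := Metric.mem_closedBall_self hR0
  obtain ⟨dstar, hdK, hmin⟩ := hKc.exists_isMinOn ⟨0, h0K⟩ ((En_continuous hx y).continuousOn)
  refine ⟨dstar, fun d => ?_⟩
  by_cases hc : En x y d ≤ En x y 0
  · refine hmin ?_
    rw [hK, Metric.mem_closedBall, dist_zero_right]
    rw [pi_norm_le_iff_of_nonneg hR0]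
    intro j
    have h1 := En_coercive hx hn y d j
    have h2 : Cb x y j ≤ ∑ i, |Cb x y i| :=
      le_trans (le_abs_self _) (Finset.single_le_sum (f := fun i => |Cb x y i|)
        (fun i _ => abs_nonneg _) (Finset.mem_univ j))
    calc ‖d j‖ = |d j| := rfl
      _ ≤ Cb x y j + En x y d := h1
      _ ≤ (∑ i, |Cb x y i|) + En x y 0 := by linarith
      _ = R := hR.symm
  · push_neg at hc
    exact le_trans (hmin h0K) hc.le

end

end AuxEn

section AuxSpline

lemma spline_energy {n : ℕ} (hn : 0 < n) {x : Fin (n + 1) → ℝ} (hx : StrictMono x)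
    {γ : ℝ → ℝ} (hcd : ContDiffOn ℝ 1 γ (Icc (x 0) (x (Fin.last n))))
    (hcub : ∀ i : Fin n, ∃ p : Polynomial ℝ, p.natDegree ≤ 3 ∧
      ∀ t ∈ Icc (x i.castSucc) (x i.succ), γ t = p.eval t)
    {y : Fin (n + 1) → ℝ} (hy : ∀ j, γ (x j) = y j) :
    ∃ d : Fin (n + 1) → ℝ,
      (∫ t in (x 0)..(x (Fin.last n)), |deriv (deriv γ) t|) = En x y d := by
  choose Q hdeg heq using hcub
  have hle : ∀ i : Fin n, x i.castSucc ≤ x i.succ :=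
    fun i => le_of_lt (hx (Fin.castSucc_lt_succ (i := i)))
  have hQa : ∀ i : Fin n, (Q i).eval (x i.castSucc) = y i.castSucc := by
    intro i
    rw [← hy i.castSucc]
    exact (heq i _ ⟨le_rfl, hle i⟩).symm
  have hQb : ∀ i : Fin n, (Q i).eval (x i.succ) = y i.succ := by
    intro i
    rw [← hy i.succ]
    exact (heq i _ ⟨hle i, le_rfl⟩).symm
  -- C¹ matching of derivatives of adjacent pieces
  have hmatch : ∀ i j : Fin n, (i : ℕ) + 1 = (j : ℕ) →
      (Q i).derivative.eval (x j.castSucc) = (Q j).derivative.eval (x j.castSucc) := by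
    intro i j hij
    set a := x j.castSucc with ha
    have h0a : x 0 < a := by
      apply hx
      simp only [Fin.lt_def]
      simp
      omega
    have hal : a < x (Fin.last n) := by
      apply hx
      simp only [Fin.lt_def, Fin.coe_castSucc, Fin.val_last]
      exact j.isLt
    have hnb : Icc (x 0) (x (Fin.last n)) ∈ 𝓝 a := Icc_mem_nhds h0a hal
    have hdiff : DifferentiableAt ℝ γ a :=
      ((hcd.differentiableOn one_ne_zero) a ⟨h0a.le, hal.le⟩).differentiableAt hnb
    have hisucc : i.succ = j.castSucc := by
      apply Fin.ext
      simp only [Fin.val_succ, Fin.coe_castSucc]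
      omega
    have hxi : x i.succ = a := by rw [hisucc]
    have hia : x i.castSucc < a := by
      rw [← hxi]; exact hx (Fin.castSucc_lt_succ (i := i))
    have hja : a < x j.succ := hx (Fin.castSucc_lt_succ (i := j))
    have hγa_i : γ a = (Q i).eval a := heq i a ⟨hia.le, hxi.ge⟩
    have hγa_j : γ a = (Q j).eval a := heq j a ⟨le_rfl, hja.le⟩
    have hLQ : HasDerivWithinAt γ ((Q i).derivative.eval a) (Iic a) a := by
      refine ((Q i).hasDerivAt a).hasDerivWithinAt.congr_of_eventuallyEq ?_ hγa_i
      refine Filter.eventuallyEq_of_mem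
        (Filter.inter_mem (mem_nhdsWithin_of_mem_nhds (Ioi_mem_nhds hia)) self_mem_nhdsWithin)
        (fun s hs => heq i s ⟨hs.1.le, hxi ▸ hs.2⟩)
    have hRQ : HasDerivWithinAt γ ((Q j).derivative.eval a) (Ici a) a := by
      refine ((Q j).hasDerivAt a).hasDerivWithinAt.congr_of_eventuallyEq ?_ hγa_j
      refine Filter.eventuallyEq_of_mem
        (Filter.inter_mem (mem_nhdsWithin_of_mem_nhds (Iio_mem_nhds hja)) self_mem_nhdsWithin)
        (fun s hs => heq j s ⟨hs.2, hs.1.le⟩)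
    have huL : UniqueDiffWithinAt ℝ (Iic a) a := uniqueDiffOn_Iic a a (mem_Iic.2 le_rfl)
    have huR : UniqueDiffWithinAt ℝ (Ici a) a := uniqueDiffOn_Ici a a (mem_Ici.2 le_rfl)
    have hQi : (Q i).derivative.eval a = deriv γ a := by
      rw [← hLQ.derivWithin huL,
        ← (hdiff.hasDerivAt.hasDerivWithinAt (s := Iic a)).derivWithin huL]
    have hQj : (Q j).derivative.eval a = deriv γ a := by
      rw [← hRQ.derivWithin huR,
        ← (hdiff.hasDerivAt.hasDerivWithinAt (s := Ici a)).derivWithin huR]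
    rw [hQi, hQj]
  -- the nodal derivative data
  refine ⟨fun j => if h : (j : ℕ) < n then (Q ⟨(j : ℕ), h⟩).derivative.eval (x j)
    else (Q ⟨n - 1, by omega⟩).derivative.eval (x j), ?_⟩
  set d : Fin (n + 1) → ℝ := fun j => if h : (j : ℕ) < n then
      (Q ⟨(j : ℕ), h⟩).derivative.eval (x j)
    else (Q ⟨n - 1, by omega⟩).derivative.eval (x j) with hd
  have hd_cast : ∀ i : Fin n, d i.castSucc = (Q i).derivative.eval (x i.castSucc) := by
    intro i
    have h : ((i.castSucc : Fin (n + 1)) : ℕ) < n := by simp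
    rw [hd]
    simp only []
    rw [dif_pos h]
    have hii : ((⟨((i.castSucc : Fin (n + 1)) : ℕ), h⟩ : Fin n)) = i := by
      apply Fin.ext; simp
    rw [hii]
  have hd_succ : ∀ i : Fin n, d i.succ = (Q i).derivative.eval (x i.succ) := by
    intro i
    by_cases h : ((i.succ : Fin (n + 1)) : ℕ) < n
    · rw [hd]
      simp only []
      rw [dif_pos h]
      set j' : Fin n := ⟨((i.succ : Fin (n + 1)) : ℕ), h⟩ with hj'
      have hcs : (j'.castSucc : Fin (n + 1)) = i.succ := by
        apply Fin.ext; simp [hj']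
      rw [← hcs]
      exact (hmatch i j' (by simp [hj'])).symm
    · rw [hd]
      simp only []
      rw [dif_neg h]
      have hii : ((⟨n - 1, by omega⟩ : Fin n)) = i := by
        apply Fin.ext
        have := i.isLt
        simp only [Fin.val_succ] at h
        simp
        omega
      rw [hii]
  have hEsum := energy_eq hx (fun i t ht => heq i t ht)
  rw [hEsum, En]
  apply Finset.sum_congr rfl
  intro i _
  have hpoly : (Q i).derivative.derivative = (Epoly x y d i).derivative.derivative := by
    have h2 := cubic_eq_herm_deriv2 (hdeg i) (hx (Fin.castSucc_lt_succ (i := i)))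
    rw [hQa i, hQb i, ← hd_cast i, ← hd_succ i] at h2
    exact h2
  rw [hpoly]

end AuxSpline

/-- Existence of an L¹ cubic Hermite interpolation spline: for any data `y`
there is a spline interpolating `y` minimizing `∫ |γ''|` among all such splines. -/
theorem stmt7 {n : ℕ} (hn : 1 ≤ n) (x : Fin (n + 1) → ℝ) (hx : StrictMono x)
    (y : Fin (n + 1) → ℝ) :
    ∃ γs : ℝ → ℝ, IsHermiteSpline x γs ∧ (∀ i, γs (x i) = y i) ∧
      ∀ γ : ℝ → ℝ, IsHermiteSpline x γ → (∀ i, γ (x i) = y i) →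
        L1E x γs ≤ L1E x γ := by
  have hn0 : 0 < n := hn
  obtain ⟨dstar, hmin⟩ := En_min hx hn0 y
  have hval : ∀ i j : Fin n, (i : ℕ) + 1 = (j : ℕ) →
      (Epoly x y dstar i).eval (x j.castSucc) = (Epoly x y dstar j).eval (x j.castSucc) := by
    intro i j hij
    have hcs : i.succ = j.castSucc := by
      apply Fin.ext; simp only [Fin.val_succ, Fin.coe_castSucc]; omega
    have hne : x i.castSucc ≠ x i.succ := ne_of_lt (hx (Fin.castSucc_lt_succ (i := i)))
    calc (Epoly x y dstar i).eval (x j.castSucc)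
        = (Epoly x y dstar i).eval (x i.succ) := by rw [hcs]
      _ = y i.succ := by rw [Epoly]; exact herm_eval_b hne _ _ _ _
      _ = y j.castSucc := by rw [hcs]
      _ = (Epoly x y dstar j).eval (x j.castSucc) := by
          rw [Epoly, herm_eval_a]
  have hder : ∀ i j : Fin n, (i : ℕ) + 1 = (j : ℕ) →
      (Epoly x y dstar i).derivative.eval (x j.castSucc)
        = (Epoly x y dstar j).derivative.eval (x j.castSucc) := by
    intro i j hij
    have hcs : i.succ = j.castSucc := by
      apply Fin.ext; simp only [Fin.val_succ, Fin.coe_castSucc]; omega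
    have hne : x i.castSucc ≠ x i.succ := ne_of_lt (hx (Fin.castSucc_lt_succ (i := i)))
    calc (Epoly x y dstar i).derivative.eval (x j.castSucc)
        = (Epoly x y dstar i).derivative.eval (x i.succ) := by rw [hcs]
      _ = dstar i.succ := by rw [Epoly]; exact herm_deriv_eval_b hne _ _ _ _
      _ = dstar j.castSucc := by rw [hcs]
      _ = (Epoly x y dstar j).derivative.eval (x j.castSucc) := by
          rw [Epoly, herm_deriv_eval_a]
  refine ⟨pw hn0 x (fun i => Epoly x y dstar i), ⟨?_, ?_⟩, ?_, ?_⟩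
  · exact (pw_contDiff hx hval hder).contDiffOn
  · intro i
    refine ⟨Epoly x y dstar i, ?_, pw_eq_on hx hval i⟩
    rw [Epoly]; exact herm_natDegree _ _ _ _ _ _
  · intro j
    by_cases h : (j : ℕ) < n
    · set i : Fin n := ⟨(j : ℕ), h⟩ with hi
      have hcs : (i.castSucc : Fin (n + 1)) = j := by
        apply Fin.ext; simp [hi]
      have hmem : x j ∈ Icc (x i.castSucc) (x i.succ) :=
        ⟨le_of_eq (by rw [hcs]), by
          rw [← hcs]; exact le_of_lt (hx (Fin.castSucc_lt_succ (i := i)))⟩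
      rw [pw_eq_on hx hval i (x j) hmem, ← hcs, Epoly, herm_eval_a]
    · set i : Fin n := ⟨n - 1, by omega⟩ with hi
      have hcs : (i.succ : Fin (n + 1)) = j := by
        apply Fin.ext
        have := j.isLt
        simp only [Fin.val_succ, hi]
        omega
      have hmem : x j ∈ Icc (x i.castSucc) (x i.succ) :=
        ⟨by rw [← hcs]; exact le_of_lt (hx (Fin.castSucc_lt_succ (i := i))),
          le_of_eq (by rw [hcs])⟩
      rw [pw_eq_on hx hval i (x j) hmem, ← hcs, Epoly,
        herm_eval_b (ne_of_lt (hx (Fin.castSucc_lt_succ (i := i))))]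
  · intro γ hγ hyγ
    have hEs : L1E x (pw hn0 x (fun i => Epoly x y dstar i)) = En x y dstar := by
      rw [L1E, energy_eq hx (pw_eq_on hx hval)]
      rfl
    obtain ⟨d, hd⟩ := spline_energy hn0 hx hγ.1 hγ.2 hyγ
    have hL : L1E x γ = En x y d := hd
    rw [hEs, hL]
    exact hmin d
end
end

section
/- Fix a partition x = (x₁ < ⋯ < xₙ). Let F_x ⊆ Her(x) be the union over all y ∈ ℝⁿ of the sets of minimizers of γ ↦ ∫_a^b |γ''(x)| dx among splines γ ∈ Her(x) with γ(xᵢ) = yᵢ for all i. Then F_x is a closed subset of Her(x). -/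
open Set MeasureTheory Filter

open Topology

noncomputable section

private lemma deriv2_eq_of_eqOn {γ : ℝ → ℝ} {p : Polynomial ℝ} {u v : ℝ}
    (h : ∀ t ∈ Set.Icc u v, γ t = p.eval t) {t : ℝ} (ht : t ∈ Set.Ioo u v) :
    deriv (deriv γ) t = (p.derivative.derivative).eval t := by
  have hev : γ =ᶠ[nhds t] fun s => p.eval s := by
    filter_upwards [Ioo_mem_nhds ht.1 ht.2] with s hs
    exact h s (Ioo_subset_Icc_self hs)
  have h2 : deriv γ =ᶠ[nhds t] fun s => p.derivative.eval s := by
    filter_upwards [hev.deriv] with s hs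
    rw [hs, Polynomial.deriv]
  rw [h2.deriv_eq, Polynomial.deriv]

private lemma eval_dd {p : Polynomial ℝ} (hp : p.natDegree ≤ 3) (t : ℝ) :
    (p.derivative.derivative).eval t = 2 * p.coeff 2 + 6 * p.coeff 3 * t := by
  have h1 : (p.derivative.derivative).natDegree < 2 := by
    have ha := Polynomial.natDegree_derivative_le p.derivative
    have hb := Polynomial.natDegree_derivative_le p
    omega
  rw [Polynomial.eval_eq_sum_range' h1]
  simp [Finset.sum_range_succ, Polynomial.coeff_derivative]
  ring

private lemma piece_int_eq {γ : ℝ → ℝ} {p : Polynomial ℝ} {u v : ℝ} (huv : u ≤ v)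
    (h : ∀ t ∈ Set.Icc u v, γ t = p.eval t) :
    ∫ t in u..v, |deriv (deriv γ) t| = ∫ t in u..v, |(p.derivative.derivative).eval t| := by
  rw [intervalIntegral.integral_of_le huv, intervalIntegral.integral_of_le huv,
    MeasureTheory.integral_Ioc_eq_integral_Ioo, MeasureTheory.integral_Ioc_eq_integral_Ioo]
  apply MeasureTheory.setIntegral_congr_fun measurableSet_Ioo
  intro t ht
  show |deriv (deriv γ) t| = _
  rw [deriv2_eq_of_eqOn h ht]

private lemma piece_integrable {γ : ℝ → ℝ} {p : Polynomial ℝ} {u v : ℝ} (huv : u ≤ v)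
    (h : ∀ t ∈ Set.Icc u v, γ t = p.eval t) :
    IntervalIntegrable (fun t => |deriv (deriv γ) t|) volume u v := by
  rw [intervalIntegrable_iff_integrableOn_Ioo_of_le huv]
  have hc : IntegrableOn (fun t => |(p.derivative.derivative).eval t|) (Set.Ioo u v) :=
    ((p.derivative.derivative.continuous).abs).integrableOn_Icc.mono_set Set.Ioo_subset_Icc_self
  exact hc.congr_fun (fun t ht => by rw [deriv2_eq_of_eqOn h ht]) measurableSet_Ioo

private lemma coeff_tendsto {u v : ℝ} (huv : u < v)
    {γq : ℕ → ℝ → ℝ} {γ : ℝ → ℝ} {pq : ℕ → Polynomial ℝ} {p : Polynomial ℝ}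
    (hq3 : ∀ q, (pq q).natDegree ≤ 3) (hp3 : p.natDegree ≤ 3)
    (hqe : ∀ q, ∀ t ∈ Set.Icc u v, γq q t = (pq q).eval t)
    (hpe : ∀ t ∈ Set.Icc u v, γ t = p.eval t)
    (hconv : ∀ t ∈ Set.Icc u v, Tendsto (fun q => γq q t) atTop (𝓝 (γ t)))
    (k : ℕ) : Tendsto (fun q => (pq q).coeff k) atTop (𝓝 (p.coeff k)) := by
  classical
  set pt : Fin 4 → ℝ := fun j => u + (j : ℝ) * ((v - u) / 3) with hpt
  have hvu : (0:ℝ) < v - u := by linarith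
  have hmem : ∀ j, pt j ∈ Set.Icc u v := by
    intro j
    have h0 : (0:ℝ) ≤ (j : ℝ) := Nat.cast_nonneg _
    have h3 : (j : ℝ) ≤ 3 := by
      have := Fin.is_le j
      exact_mod_cast Nat.cast_le.mpr this
    constructor
    · simp only [hpt]; nlinarith
    · simp only [hpt]; nlinarith
  have hinj : Set.InjOn pt (Finset.univ : Finset (Fin 4)) := by
    intro a _ b _ hab
    simp only [hpt] at hab
    have h1 : (a : ℝ) = (b : ℝ) := by
      have h3 : (v - u) / 3 ≠ 0 := by positivity
      field_simp at hab
      have hvu' : v - u ≠ 0 := ne_of_gt hvu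
      apply mul_right_cancel₀ hvu'
      linarith
    have : (a : ℕ) = (b : ℕ) := by exact_mod_cast h1
    exact Fin.ext this
  have hrep : ∀ r : Polynomial ℝ, r.natDegree ≤ 3 →
      r = Lagrange.interpolate Finset.univ pt (fun j => r.eval (pt j)) := by
    intro r hr
    apply Lagrange.eq_interpolate hinj
    have : r.degree ≤ (3 : ℕ) := Polynomial.degree_le_natDegree.trans (by exact_mod_cast hr)
    refine lt_of_le_of_lt this ?_
    simp
    exact_mod_cast Nat.lt_succ_self 3
  set L : (Fin 4 → ℝ) →ₗ[ℝ] ℝ :=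
    (Polynomial.lcoeff ℝ k).comp (Lagrange.interpolate Finset.univ pt) with hL
  have hLc : Continuous L := L.continuous_of_finiteDimensional
  have key : ∀ (r : Polynomial ℝ) (g : ℝ → ℝ), r.natDegree ≤ 3 →
      (∀ t ∈ Set.Icc u v, g t = r.eval t) → r.coeff k = L (fun j => g (pt j)) := by
    intro r g hr hg
    have h1 : (fun j => g (pt j)) = fun j => r.eval (pt j) :=
      funext fun j => hg _ (hmem j)
    rw [h1]
    conv_lhs => rw [hrep r hr]
    simp [hL, Polynomial.lcoeff_apply]
  have hvals : Tendsto (fun q => fun j => γq q (pt j)) atTop (𝓝 (fun j => γ (pt j))) := by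
    rw [tendsto_pi_nhds]
    intro j
    exact hconv _ (hmem j)
  have hcomp := (hLc.tendsto _).comp hvals
  have e1 : ∀ q, (pq q).coeff k = L (fun j => γq q (pt j)) :=
    fun q => key _ _ (hq3 q) (hqe q)
  have e2 : p.coeff k = L (fun j => γ (pt j)) := key _ _ hp3 hpe
  simp only [e1, e2]
  exact hcomp

private lemma abs_linear_integral_tendsto (u v : ℝ) {aq bq : ℕ → ℝ} {a b : ℝ}
    (ha : Tendsto aq atTop (𝓝 a)) (hb : Tendsto bq atTop (𝓝 b)) :
    Tendsto (fun q => ∫ t in u..v, |aq q + bq q * t|) atTop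
      (𝓝 (∫ t in u..v, |a + b * t|)) := by
  apply intervalIntegral.tendsto_integral_filter_of_dominated_convergence
      (fun t => (|a| + 1) + (|b| + 1) * |t|)
  · filter_upwards with q
    exact ((continuous_const.add (continuous_const.mul continuous_id)).abs).aestronglyMeasurable.restrict
  · have h1 : ∀ᶠ q in atTop, |aq q| < |a| + 1 :=
      (ha.abs).eventually_lt_const (lt_add_one _)
    have h2 : ∀ᶠ q in atTop, |bq q| < |b| + 1 :=
      (hb.abs).eventually_lt_const (lt_add_one _)
    filter_upwards [h1, h2] with q hq1 hq2
    filter_upwards with t _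
    have habs : |aq q + bq q * t| ≤ |aq q| + |bq q| * |t| := by
      calc |aq q + bq q * t| ≤ |aq q| + |bq q * t| := abs_add_le _ _
      _ = |aq q| + |bq q| * |t| := by rw [abs_mul]
    have ht0 : (0:ℝ) ≤ |t| := abs_nonneg t
    simp only [Real.norm_eq_abs, abs_abs]
    nlinarith
  · apply Continuous.intervalIntegrable
    exact continuous_const.add (continuous_const.mul continuous_abs)
  · filter_upwards with t _
    exact ((ha.add (hb.mul_const t)).abs)

private lemma piece_tendsto {u v : ℝ} (huv : u < v) {γq : ℕ → ℝ → ℝ} {γ : ℝ → ℝ}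
    (hq : ∀ q, IsCubicOn (γq q) (Set.Icc u v)) (hγ : IsCubicOn γ (Set.Icc u v))
    (hconv : ∀ t ∈ Set.Icc u v, Tendsto (fun q => γq q t) atTop (𝓝 (γ t))) :
    Tendsto (fun q => ∫ t in u..v, |deriv (deriv (γq q)) t|) atTop
      (𝓝 (∫ t in u..v, |deriv (deriv γ) t|)) := by
  choose pq hq3 hqe using hq
  obtain ⟨p, hp3, hpe⟩ := hγ
  have hc2 := (coeff_tendsto huv hq3 hp3 hqe hpe hconv 2).const_mul (2:ℝ)
  have hc3 := (coeff_tendsto huv hq3 hp3 hqe hpe hconv 3).const_mul (6:ℝ)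
  have key := abs_linear_integral_tendsto u v hc2 hc3
  have e : ∀ (r : Polynomial ℝ) (g : ℝ → ℝ), r.natDegree ≤ 3 →
      (∀ t ∈ Set.Icc u v, g t = r.eval t) →
      (∫ t in u..v, |deriv (deriv g) t|) = ∫ t in u..v, |2 * r.coeff 2 + 6 * r.coeff 3 * t| := by
    intro r g hr hg
    rw [piece_int_eq huv.le hg]
    apply intervalIntegral.integral_congr
    intro t _
    show |Polynomial.eval t (Polynomial.derivative (Polynomial.derivative r))| = _
    rw [eval_dd hr]
  have e1 : ∀ q, (∫ t in u..v, |deriv (deriv (γq q)) t|)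
      = ∫ t in u..v, |2 * (pq q).coeff 2 + 6 * (pq q).coeff 3 * t| :=
    fun q => e _ _ (hq3 q) (hqe q)
  rw [e _ _ hp3 hpe]
  simp only [e1]
  exact key

private lemma L1E_eq_sum {n : ℕ} (x : Fin (n+1) → ℝ) (hx : StrictMono x) {γ : ℝ → ℝ}
    (hγ : IsHermiteSpline x γ) :
    L1E x γ = ∑ i : Fin n, ∫ t in (x i.castSucc)..(x i.succ), |deriv (deriv γ) t| := by
  classical
  set a : ℕ → ℝ := fun k => x ⟨min k n, Nat.lt_succ_of_le (min_le_right _ _)⟩ with ha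
  have haeq : ∀ (k : ℕ) (hk : k ≤ n), a k = x ⟨k, Nat.lt_succ_of_le hk⟩ :=
    fun k hk => congrArg x (Fin.ext (min_eq_left hk))
  have hcs : ∀ i : Fin n, a i = x i.castSucc := by
    intro i
    rw [haeq i i.isLt.le]
    exact congrArg x (Fin.ext (by simp))
  have hsc : ∀ i : Fin n, a (i + 1) = x i.succ := by
    intro i
    rw [haeq (i + 1) i.isLt]
    exact congrArg x (Fin.ext (by simp))
  have hint : ∀ k < n, IntervalIntegrable (fun t => |deriv (deriv γ) t|) volume (a k) (a (k+1)) := by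
    intro k hk
    obtain ⟨p, hp3, hpe⟩ := hγ.2 ⟨k, hk⟩
    rw [hcs ⟨k, hk⟩, hsc ⟨k, hk⟩]
    exact piece_integrable (hx (Fin.castSucc_lt_succ (i := ⟨k, hk⟩))).le hpe
  have hdecomp := intervalIntegral.sum_integral_adjacent_intervals hint
  have h0 : a 0 = x 0 := haeq 0 (Nat.zero_le n) |>.trans (congrArg x (Fin.ext rfl))
  have hn' : a n = x (Fin.last n) := haeq n le_rfl
  rw [L1E, ← h0, ← hn', ← hdecomp]
  rw [← Fin.sum_univ_eq_sum_range (fun k => ∫ t in (a k)..(a (k+1)), |deriv (deriv γ) t|) n]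
  exact Finset.sum_congr rfl fun i _ => by rw [hcs i, hsc i]

private lemma L1E_tendsto {n : ℕ} {x : Fin (n+1) → ℝ} (hx : StrictMono x)
    {γq : ℕ → ℝ → ℝ} {γ : ℝ → ℝ}
    (hq : ∀ q, IsHermiteSpline x (γq q)) (hγ : IsHermiteSpline x γ)
    (hconv : ∀ t ∈ Set.Icc (x 0) (x (Fin.last n)), Tendsto (fun q => γq q t) atTop (𝓝 (γ t))) :
    Tendsto (fun q => L1E x (γq q)) atTop (𝓝 (L1E x γ)) := by
  have hsub : ∀ i : Fin n, Set.Icc (x i.castSucc) (x i.succ) ⊆ Set.Icc (x 0) (x (Fin.last n)) :=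
    fun i => Set.Icc_subset_Icc (hx.monotone (Fin.zero_le _)) (hx.monotone (Fin.le_last _))
  have e : ∀ q, L1E x (γq q) = ∑ i : Fin n, ∫ t in (x i.castSucc)..(x i.succ),
      |deriv (deriv (γq q)) t| := fun q => L1E_eq_sum x hx (hq q)
  rw [L1E_eq_sum x hx hγ]
  simp only [e]
  apply tendsto_finset_sum
  intro i _
  exact piece_tendsto (hx (Fin.castSucc_lt_succ (i := i))) (fun q => (hq q).2 i) (hγ.2 i)
    (fun t ht => hconv t (hsub i ht))

/-- `F_x` is closed in `Her(x)`: a uniform limit (on `[a,b]`) of L¹ interpolation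
splines which is itself a Hermite spline belongs to `F_x`. -/
theorem stmt8 {n : ℕ} (hn : 1 ≤ n) (x : Fin (n + 1) → ℝ) (hx : StrictMono x)
    (s : ℕ → ℝ → ℝ) (hs : ∀ p, s p ∈ Fx x)
    (σ : ℝ → ℝ) (hσ : IsHermiteSpline x σ)
    (hconv : TendstoUniformlyOn s σ atTop (Set.Icc (x 0) (x (Fin.last n)))) :
    σ ∈ Fx x := by
  refine ⟨hσ, ?_⟩
  intro δ hδ hδσ
  set D : ℕ → ℝ → ℝ := fun q t => δ t + s q t - σ t with hD
  have hDH : ∀ q, IsHermiteSpline x (D q) := by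
    intro q
    constructor
    · exact (hδ.1.add ((hs q).1.1)).sub hσ.1
    · intro i
      obtain ⟨p1, h1, e1⟩ := hδ.2 i
      obtain ⟨p2, h2, e2⟩ := (hs q).1.2 i
      obtain ⟨p3, h3, e3⟩ := hσ.2 i
      refine ⟨p1 + p2 - p3, ?_, ?_⟩
      · exact le_trans (Polynomial.natDegree_sub_le _ _)
          (max_le (le_trans (Polynomial.natDegree_add_le _ _) (max_le h1 h2)) h3)
      · intro t ht
        simp [hD, e1 t ht, e2 t ht, e3 t ht]
  have hle : ∀ q, L1E x (s q) ≤ L1E x (D q) := by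
    intro q
    apply (hs q).2 (D q) (hDH q)
    intro i
    simp [hD, hδσ i]
  have hptw : ∀ t ∈ Set.Icc (x 0) (x (Fin.last n)), Tendsto (fun q => s q t) atTop (𝓝 (σ t)) :=
    fun t ht => hconv.tendsto_at ht
  have h1 : Tendsto (fun q => L1E x (s q)) atTop (𝓝 (L1E x σ)) :=
    L1E_tendsto hx (fun q => (hs q).1) hσ hptw
  have h2 : Tendsto (fun q => L1E x (D q)) atTop (𝓝 (L1E x δ)) := by
    apply L1E_tendsto hx hDH hδ
    intro t ht
    have h3 : Tendsto (fun q => δ t + s q t - σ t) atTop (𝓝 (δ t + σ t - σ t)) :=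
      (tendsto_const_nhds.add (hptw t ht)).sub tendsto_const_nhds
    simpa [hD] using h3
  exact le_of_tendsto_of_tendsto' h1 h2 hle
end
end

section
/- Any continuous nonnegative functional J on ℝⁿ of the form J(b) = ∫_a^b |γ(y,b)''(x)| dx (with fixed nodal values y) is coercive on the quotient by constant shifts: J(b) → ∞ as the variation max_i bᵢ − min_i bᵢ → ∞; consequently the minimization of J over b ∈ ℝⁿ attains its infimum. -/
open Set MeasureTheory Filter

noncomputable section

open Polynomial

lemma integral_quadratic (q0 q1 q2 a b : ℝ) :
    ∫ t in a..b, (q0 + q1*t + q2*t^2) =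
      q0*(b-a) + q1*(b^2-a^2)/2 + q2*(b^3-a^3)/3 := by
  have h : ∀ t : ℝ, HasDerivAt (fun u : ℝ => q0*u + q1/2*u^2 + q2/3*u^3)
      (q0 + q1*t + q2*t^2) t := by
    intro t
    have h1 : HasDerivAt (fun u : ℝ => u) 1 t := hasDerivAt_id t
    have h2 : HasDerivAt (fun u : ℝ => u^2) (2*t) t := by simpa using hasDerivAt_pow 2 t
    have h3 : HasDerivAt (fun u : ℝ => u^3) (3*t^2) t := by
      simpa using hasDerivAt_pow 3 t
    exact (((h1.const_mul q0).add (h2.const_mul (q1/2))).add (h3.const_mul (q2/3))).congr_deriv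
      (by ring)
  rw [intervalIntegral.integral_eq_sub_of_hasDerivAt (fun t _ => h t)
    ((Continuous.intervalIntegrable (by continuity) _ _))]
  ring

lemma cubic_double_roots_zero {a b : ℝ} (hab : a ≠ b) {p : Polynomial ℝ}
    (hp : p.natDegree ≤ 3)
    (h1 : p.eval a = 0) (h2 : p.eval b = 0)
    (h3 : p.derivative.eval a = 0) (h4 : p.derivative.eval b = 0) : p = 0 := by
  by_contra h0
  have ha2 : 1 < p.rootMultiplicity a :=
    (Polynomial.one_lt_rootMultiplicity_iff_isRoot h0).2 ⟨h1, h3⟩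
  have hb2 : 1 < p.rootMultiplicity b :=
    (Polynomial.one_lt_rootMultiplicity_iff_isRoot h0).2 ⟨h2, h4⟩
  have d1 : (X - C a)^2 ∣ p :=
    dvd_trans (pow_dvd_pow _ ha2) (p.pow_rootMultiplicity_dvd a)
  have d2 : (X - C b)^2 ∣ p :=
    dvd_trans (pow_dvd_pow _ hb2) (p.pow_rootMultiplicity_dvd b)
  have hco : IsCoprime ((X - C a)^2) ((X - C b)^2 : Polynomial ℝ) :=
    (Polynomial.isCoprime_X_sub_C_of_isUnit_sub
      ((sub_ne_zero.2 hab).isUnit)).pow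
  have hd : (X - C a)^2 * (X - C b)^2 ∣ p := hco.mul_dvd d1 d2
  have hle := Polynomial.natDegree_le_of_dvd hd h0
  rw [Polynomial.natDegree_mul (pow_ne_zero _ (Polynomial.X_sub_C_ne_zero a))
      (pow_ne_zero _ (Polynomial.X_sub_C_ne_zero b))] at hle
  simp [Polynomial.natDegree_pow, Polynomial.natDegree_X_sub_C] at hle
  omega

/-- The second derivative of a cubic Hermite interpolant. -/
def gfun (a b ya yb da db t : ℝ) : ℝ :=
  2*((3*(yb - ya)/(b - a) - 2*da - db)/(b - a)) +
    6*((da + db - 2*(yb - ya)/(b - a))/(b - a)^2)*(t - a)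

lemma gfun_continuous (a b ya yb da db : ℝ) : Continuous (gfun a b ya yb da db) := by
  unfold gfun; fun_prop

private lemma derivQ1 (a ya da c2 c3 : ℝ) :
    derivative (C ya + C da * (X - C a) + C c2 * (X - C a)^2 + C c3 * (X - C a)^3)
      = C da + C (2*c2) * (X - C a) + C (3*c3) * (X - C a)^2 := by
  simp only [derivative_add, derivative_mul, derivative_C, derivative_pow,
    derivative_sub, derivative_X, derivative_one, C_mul]
  push_cast
  ring

private lemma derivQ2 (a da c2 c3 : ℝ) :
    derivative (C da + C (2*c2) * (X - C a) + C (3*c3) * (X - C a)^2)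
      = C (2*c2) + C (3*c3) * (C 2 * (X - C a)) := by
  simp only [derivative_add, derivative_mul, derivative_C, derivative_pow,
    derivative_sub, derivative_X, derivative_one, C_mul]
  push_cast
  ring

lemma hermite_second_deriv {a b ya yb da db : ℝ} (hab : a < b) {p : Polynomial ℝ}
    (hp : p.natDegree ≤ 3) (e1 : p.eval a = ya) (e2 : p.eval b = yb)
    (e3 : p.derivative.eval a = da) (e4 : p.derivative.eval b = db) :
    ∀ t, p.derivative.derivative.eval t = gfun a b ya yb da db t := by
  have hba : b - a ≠ 0 := sub_ne_zero.2 hab.ne'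
  obtain ⟨c2, hc2⟩ : ∃ u : ℝ, u = (3*(yb - ya)/(b - a) - 2*da - db)/(b - a) := ⟨_, rfl⟩
  obtain ⟨c3, hc3⟩ : ∃ u : ℝ, u = (da + db - 2*(yb - ya)/(b - a))/(b - a)^2 := ⟨_, rfl⟩
  obtain ⟨Q, hQ⟩ : ∃ q : Polynomial ℝ,
      q = C ya + C da * (X - C a) + C c2 * (X - C a)^2 + C c3 * (X - C a)^3 := ⟨_, rfl⟩
  have hdQ : Q.derivative = C da + C (2*c2) * (X - C a) + C (3*c3) * (X - C a)^2 := by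
    rw [hQ]; exact derivQ1 a ya da c2 c3
  have hdQ2 : Q.derivative.derivative = C (2*c2) + C (3*c3) * (C 2 * (X - C a)) := by
    rw [hdQ]; exact derivQ2 a da c2 c3
  have hQdeg : Q.natDegree ≤ 3 := by
    rw [hQ]; compute_degree
  have eQa : Q.eval a = ya := by rw [hQ]; simp
  have eQb : Q.eval b = yb := by
    rw [hQ]
    simp only [eval_add, eval_mul, eval_pow, eval_sub, eval_C, eval_X]
    rw [hc2, hc3]; field_simp; ring
  have eQa' : Q.derivative.eval a = da := by rw [hdQ]; simp
  have eQb' : Q.derivative.eval b = db := by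
    rw [hdQ]
    simp only [eval_add, eval_mul, eval_pow, eval_sub, eval_C, eval_X]
    rw [hc2, hc3]; field_simp; ring
  have hpQ : p = Q := by
    have hz : p - Q = 0 := by
      apply cubic_double_roots_zero hab.ne
        (le_trans (Polynomial.natDegree_sub_le _ _) (max_le hp hQdeg))
      · simp [e1, eQa]
      · simp [e2, eQb]
      · simp [Polynomial.derivative_sub, e3, eQa']
      · simp [Polynomial.derivative_sub, e4, eQb']
    exact sub_eq_zero.1 hz
  intro t
  rw [hpQ, hdQ2]
  simp only [eval_add, eval_mul, eval_sub, eval_C, eval_X]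
  rw [hc2, hc3]
  unfold gfun
  ring

lemma weighted_le {a b : ℝ} (hab : a < b) (w g : ℝ → ℝ)
    (hw : Continuous w) (hgc : Continuous g)
    (hwb : ∀ t ∈ Set.Icc a b, |w t| ≤ b - a) :
    |∫ t in a..b, w t * g t| ≤ (b - a) * ∫ t in a..b, |g t| := by
  have h1 : |∫ t in a..b, w t * g t| ≤ ∫ t in a..b, |w t| * |g t| := by
    simpa [Real.norm_eq_abs] using
      intervalIntegral.norm_integral_le_integral_norm (μ := volume)
        (f := fun t => w t * g t) (a := a) (b := b) hab.le
  refine h1.trans ?_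
  rw [← intervalIntegral.integral_const_mul]
  apply intervalIntegral.integral_mono_on hab.le
    ((hw.abs.mul hgc.abs).intervalIntegrable _ _)
    ((continuous_const.mul hgc.abs).intervalIntegrable _ _)
  intro t ht
  exact mul_le_mul_of_nonneg_right (hwb t ht) (abs_nonneg _)

lemma coercive1 {a b ya yb da db : ℝ} (hab : a < b) :
    |da - (yb - ya)/(b - a)| ≤ ∫ t in a..b, |gfun a b ya yb da db t| := by
  have hba : (0:ℝ) < b - a := sub_pos.2 hab
  obtain ⟨c, hc⟩ : ∃ u:ℝ, u = 2*((3*(yb - ya)/(b - a) - 2*da - db)/(b - a)) := ⟨_, rfl⟩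
  obtain ⟨d, hd⟩ : ∃ u:ℝ, u = 6*((da + db - 2*(yb - ya)/(b - a))/(b - a)^2) := ⟨_, rfl⟩
  have hgf : ∀ t, gfun a b ya yb da db t = c + d*(t - a) := by
    intro t; rw [hc, hd]; rfl
  have hval : ∫ t in a..b, ((b - t) * gfun a b ya yb da db t) = (yb - ya) - da*(b - a) := by
    have h1 : ∀ t:ℝ, (b - t) * gfun a b ya yb da db t
        = (b*c - a*b*d) + (b*d + a*d - c)*t + (-d)*t^2 := by
      intro t; rw [hgf t]; ring
    simp only [h1]
    rw [integral_quadratic, hc, hd]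
    field_simp
    ring
  have hW := weighted_le hab (fun t => b - t) _ (by fun_prop)
    (gfun_continuous a b ya yb da db)
    (fun t ht => by
      show |b - t| ≤ b - a
      rw [abs_of_nonneg (by linarith [ht.2])]; linarith [ht.1])
  rw [hval] at hW
  have heq : |da - (yb - ya)/(b - a)| = |(yb - ya) - da*(b - a)| / (b - a) := by
    have h2 : (yb - ya) - da*(b - a) = -((da - (yb - ya)/(b - a))*(b-a)) := by
      field_simp; try ring
    rw [h2, abs_neg, abs_mul, abs_of_pos hba, mul_div_cancel_right₀ _ hba.ne']
  rw [heq, div_le_iff₀ hba]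
  calc |(yb - ya) - da*(b - a)|
      ≤ (b - a) * ∫ t in a..b, |gfun a b ya yb da db t| := hW
    _ = (∫ t in a..b, |gfun a b ya yb da db t|) * (b - a) := mul_comm _ _

lemma coercive2 {a b ya yb da db : ℝ} (hab : a < b) :
    |db - (yb - ya)/(b - a)| ≤ ∫ t in a..b, |gfun a b ya yb da db t| := by
  have hba : (0:ℝ) < b - a := sub_pos.2 hab
  obtain ⟨c, hc⟩ : ∃ u:ℝ, u = 2*((3*(yb - ya)/(b - a) - 2*da - db)/(b - a)) := ⟨_, rfl⟩
  obtain ⟨d, hd⟩ : ∃ u:ℝ, u = 6*((da + db - 2*(yb - ya)/(b - a))/(b - a)^2) := ⟨_, rfl⟩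
  have hgf : ∀ t, gfun a b ya yb da db t = c + d*(t - a) := by
    intro t; rw [hc, hd]; rfl
  have hval : ∫ t in a..b, ((t - a) * gfun a b ya yb da db t) = db*(b - a) - (yb - ya) := by
    have h1 : ∀ t:ℝ, (t - a) * gfun a b ya yb da db t
        = (a^2*d - a*c) + (c - 2*a*d)*t + d*t^2 := by
      intro t; rw [hgf t]; ring
    simp only [h1]
    rw [integral_quadratic, hc, hd]
    field_simp
    ring
  have hW := weighted_le hab (fun t => t - a) _ (by fun_prop)
    (gfun_continuous a b ya yb da db)
    (fun t ht => by
      show |t - a| ≤ b - a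
      rw [abs_of_nonneg (by linarith [ht.1])]; linarith [ht.2])
  rw [hval] at hW
  have heq : |db - (yb - ya)/(b - a)| = |db*(b - a) - (yb - ya)| / (b - a) := by
    have h2 : db*(b - a) - (yb - ya) = (db - (yb - ya)/(b - a))*(b-a) := by
      field_simp; try ring
    rw [h2, abs_mul, abs_of_pos hba, mul_div_cancel_right₀ _ hba.ne']
  rw [heq, div_le_iff₀ hba]
  calc |db*(b - a) - (yb - ya)|
      ≤ (b - a) * ∫ t in a..b, |gfun a b ya yb da db t| := hW
    _ = (∫ t in a..b, |gfun a b ya yb da db t|) * (b - a) := mul_comm _ _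

lemma key_interval {a b ya yb da db : ℝ} (hab : a < b) {γ : ℝ → ℝ}
    (hcub : IsCubicOn γ (Set.Icc a b))
    (hya : γ a = ya) (hyb : γ b = yb)
    (hda : derivWithin γ (Set.Icc a b) a = da) (hdb : derivWithin γ (Set.Icc a b) b = db) :
    ∀ t ∈ Set.Ioo a b, deriv (deriv γ) t = gfun a b ya yb da db t := by
  obtain ⟨p, hdeg, hpe⟩ := hcub
  have hmema : a ∈ Set.Icc a b := ⟨le_rfl, hab.le⟩
  have hmemb : b ∈ Set.Icc a b := ⟨hab.le, le_rfl⟩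
  have hud := uniqueDiffOn_Icc hab
  have hder : ∀ s ∈ Set.Icc a b, derivWithin γ (Set.Icc a b) s = p.derivative.eval s := by
    intro s hs
    rw [derivWithin_congr hpe (hpe s hs),
      (p.differentiable.differentiableAt).derivWithin (hud s hs)]
    exact p.deriv
  have e1 : p.eval a = ya := (hpe a hmema).symm.trans hya
  have e2 : p.eval b = yb := (hpe b hmemb).symm.trans hyb
  have e3 : p.derivative.eval a = da := by rw [← hder a hmema, hda]
  have e4 : p.derivative.eval b = db := by rw [← hder b hmemb, hdb]
  have hform := hermite_second_deriv hab hdeg e1 e2 e3 e4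
  intro t ht
  have hnt : Set.Ioo a b ∈ nhds t := Ioo_mem_nhds ht.1 ht.2
  have hev : γ =ᶠ[nhds t] fun s => p.eval s :=
    Filter.eventuallyEq_of_mem hnt (fun s hs => hpe s (Set.Ioo_subset_Icc_self hs))
  have h2 : deriv (deriv γ) t = deriv (deriv fun s => p.eval s) t := (hev.deriv).deriv_eq
  rw [h2]
  have h3 : (deriv fun s => p.eval s) = fun s => p.derivative.eval s :=
    funext fun s => p.deriv
  rw [h3, (derivative p).deriv]
  exact hform t

lemma integral_piece {a b : ℝ} (hab : a < b) {f g : ℝ → ℝ} (hg : Continuous g)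
    (h : ∀ t ∈ Set.Ioo a b, f t = g t) :
    IntervalIntegrable f volume a b ∧ ∫ t in a..b, f t = ∫ t in a..b, g t := by
  have hnb : ({b} : Set ℝ)ᶜ ∈ ae (volume : Measure ℝ) :=
    compl_mem_ae_iff.mpr (measure_singleton b)
  constructor
  · rw [intervalIntegrable_iff, Set.uIoc_of_le hab.le]
    have haeq : g =ᵐ[(volume : Measure ℝ).restrict (Set.Ioc a b)] f := by
      refine (MeasureTheory.ae_restrict_iff' measurableSet_Ioc).mpr ?_
      filter_upwards [hnb] with t ht hmem
      exact (h t ⟨hmem.1, lt_of_le_of_ne hmem.2 ht⟩).symm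
    exact (hg.integrableOn_Ioc).congr haeq
  · apply intervalIntegral.integral_congr_ae
    filter_upwards [hnb] with t ht hmem
    rw [Set.uIoc_of_le hab.le] at hmem
    exact h t ⟨hmem.1, lt_of_le_of_ne hmem.2 ht⟩

/-- Second derivative of the spline on subinterval `i`, as an explicit function of data. -/
def Gp {n : ℕ} (x y : Fin (n+1) → ℝ) (i : Fin n) (b : Fin (n+1) → ℝ) (t : ℝ) : ℝ :=
  gfun (x i.castSucc) (x i.succ) (y i.castSucc) (y i.succ) (b i.castSucc) (b i.succ) t

/-- The explicit value of the functional `b ↦ ∫|γ(y,b)''|`. -/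
def Hf {n : ℕ} (x y : Fin (n+1) → ℝ) (b : Fin (n+1) → ℝ) : ℝ :=
  ∑ i : Fin n, ∫ t in (x i.castSucc)..(x i.succ), |Gp x y i b t|

lemma Hf_cont {n : ℕ} (x y : Fin (n+1) → ℝ) : Continuous (Hf x y) := by
  unfold Hf
  apply continuous_finset_sum
  intro i _
  apply intervalIntegral.continuous_parametric_intervalIntegral_of_continuous' (μ := volume)
  have : Continuous (fun p : (Fin (n+1) → ℝ) × ℝ => |Gp x y i p.1 p.2|) := by
    unfold Gp gfun
    fun_prop
  exact this

/-- With fixed nodal values `y`, the functional `b ↦ ∫ |γ(y,b)''|` blows up as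
the variation `max bᵢ − min bᵢ` tends to infinity, and consequently attains
its infimum over `b ∈ ℝⁿ`. -/
theorem stmt13 {n : ℕ} (hn : 1 ≤ n) (x : Fin (n + 1) → ℝ) (hx : StrictMono x)
    (y : Fin (n + 1) → ℝ) (Γ : (Fin (n + 1) → ℝ) → ℝ → ℝ)
    (hΓ : ∀ b, IsHermiteSpline x (Γ b) ∧ (∀ i, Γ b (x i) = y i) ∧
      ∀ i, derivWithin (Γ b) (Set.Icc (x 0) (x (Fin.last n))) (x i) = b i) :
    (∀ C : ℝ, ∃ M : ℝ, ∀ b : Fin (n + 1) → ℝ,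
        (∃ i j, M ≤ b i - b j) → C ≤ L1E x (Γ b)) ∧
    ∃ bstar : Fin (n + 1) → ℝ, ∀ b : Fin (n + 1) → ℝ,
      L1E x (Γ bstar) ≤ L1E x (Γ b) := by
  have hab : ∀ i : Fin n, x i.castSucc < x i.succ := fun i => hx (Fin.castSucc_lt_succ : i.castSucc < i.succ)
  have hsub : ∀ i : Fin n,
      Set.Icc (x i.castSucc) (x i.succ) ⊆ Set.Icc (x 0) (x (Fin.last n)) :=
    fun i => Set.Icc_subset_Icc (hx.monotone (Fin.zero_le _)) (hx.monotone (Fin.le_last _))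
  have hder : ∀ (b : Fin (n+1) → ℝ) (i : Fin n) (j : Fin (n+1)),
      x j ∈ Set.Icc (x i.castSucc) (x i.succ) →
      derivWithin (Γ b) (Set.Icc (x i.castSucc) (x i.succ)) (x j) = b j := by
    intro b i j hj
    rw [derivWithin_subset (hsub i) (uniqueDiffOn_Icc (hab i) _ hj)
      (((hΓ b).1.1.differentiableOn one_ne_zero) _ (hsub i hj))]
    exact (hΓ b).2.2 j
  have hkey : ∀ (b : Fin (n+1) → ℝ) (i : Fin n),
      ∀ t ∈ Set.Ioo (x i.castSucc) (x i.succ),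
      deriv (deriv (Γ b)) t = Gp x y i b t := by
    intro b i
    exact key_interval (hab i) ((hΓ b).1.2 i) ((hΓ b).2.1 _) ((hΓ b).2.1 _)
      (hder b i i.castSucc ⟨le_rfl, (hab i).le⟩)
      (hder b i i.succ ⟨(hab i).le, le_rfl⟩)
  have hGpcont : ∀ (i : Fin n) (b : Fin (n+1) → ℝ), Continuous (Gp x y i b) :=
    fun i b => gfun_continuous _ _ _ _ _ _
  have hpiece : ∀ (b : Fin (n+1) → ℝ) (i : Fin n),
      IntervalIntegrable (fun t => |deriv (deriv (Γ b)) t|) volume (x i.castSucc) (x i.succ) ∧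
      (∫ t in (x i.castSucc)..(x i.succ), |deriv (deriv (Γ b)) t|)
        = ∫ t in (x i.castSucc)..(x i.succ), |Gp x y i b t| := by
    intro b i
    exact integral_piece (hab i) (hGpcont i b).abs
      (fun t ht => by rw [hkey b i t ht])
  have hsplit : ∀ b, L1E x (Γ b) = Hf x y b := by
    intro b
    have hXlt : ∀ k : ℕ, min k n < n + 1 := fun k => Nat.lt_succ_of_le (min_le_right _ _)
    set X : ℕ → ℝ := fun k => x ⟨min k n, hXlt k⟩ with hX
    have hcs : ∀ i : Fin n, X i.val = x i.castSucc :=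
      fun i => congrArg x (Fin.ext (by simp [Nat.min_eq_left i.isLt.le]))
    have hsc : ∀ i : Fin n, X (i.val + 1) = x i.succ :=
      fun i => congrArg x (Fin.ext (by simp [Nat.min_eq_left (Nat.succ_le_of_lt i.isLt)]))
    have hint : ∀ k, k < n →
        IntervalIntegrable (fun t => |deriv (deriv (Γ b)) t|) volume (X k) (X (k+1)) := by
      intro k hk
      have h := (hpiece b ⟨k, hk⟩).1
      rwa [← hcs ⟨k, hk⟩, ← hsc ⟨k, hk⟩] at h
    have hsum := intervalIntegral.sum_integral_adjacent_intervals hint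
    have hX0 : X 0 = x 0 := congrArg x (Fin.ext (by simp))
    have hXn : X n = x (Fin.last n) := congrArg x (Fin.ext (by simp [Fin.last]))
    unfold L1E Hf
    rw [← hX0, ← hXn, ← hsum,
      ← Fin.sum_univ_eq_sum_range (fun k => ∫ t in X k..X (k+1), |deriv (deriv (Γ b)) t|) n]
    apply Finset.sum_congr rfl
    intro i _
    rw [hcs i, hsc i]
    exact (hpiece b i).2
  have hne : (Finset.univ : Finset (Fin n)).Nonempty := ⟨⟨0, hn⟩, Finset.mem_univ _⟩
  set K : ℝ := Finset.univ.sup' hne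
    (fun i : Fin n => |(y i.succ - y i.castSucc)/(x i.succ - x i.castSucc)|) with hKdef
  have hKb : ∀ i : Fin n, |(y i.succ - y i.castSucc)/(x i.succ - x i.castSucc)| ≤ K := by
    intro i
    rw [hKdef]
    exact Finset.le_sup'
      (fun i : Fin n => |(y i.succ - y i.castSucc)/(x i.succ - x i.castSucc)|)
      (Finset.mem_univ i)
  have hK0 : 0 ≤ K := le_trans (abs_nonneg _) (hKb ⟨0, hn⟩)
  have hHnn : ∀ b, 0 ≤ Hf x y b := fun b => Finset.sum_nonneg
    (fun i _ => intervalIntegral.integral_nonneg (hab i).le (fun t _ => abs_nonneg _))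
  have hterm : ∀ (b : Fin (n+1) → ℝ) (i : Fin n),
      (∫ t in (x i.castSucc)..(x i.succ), |Gp x y i b t|) ≤ Hf x y b := by
    intro b i
    exact Finset.single_le_sum
      (f := fun i : Fin n => ∫ t in (x i.castSucc)..(x i.succ), |Gp x y i b t|)
      (fun j _ => intervalIntegral.integral_nonneg (hab j).le (fun t _ => abs_nonneg _))
      (Finset.mem_univ i)
  have hcoord : ∀ (b : Fin (n+1) → ℝ) (j : Fin (n+1)), |b j| ≤ Hf x y b + K := by
    intro b j
    by_cases hj : (j : ℕ) < n
    · set i : Fin n := ⟨(j:ℕ), hj⟩ with hi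
      have hji : i.castSucc = j := Fin.ext rfl
      set s : ℝ := (y i.succ - y i.castSucc)/(x i.succ - x i.castSucc) with hs
      have h1 : |b i.castSucc - s| ≤ Hf x y b :=
        le_trans (coercive1 (hab i)) (hterm b i)
      have h3 := hKb i
      have h5 : |b i.castSucc| ≤ |b i.castSucc - s| + |s| := by
        have h6 := abs_add_le (b i.castSucc - s) s
        simpa using h6
      rw [← hji]
      rw [← hs] at h3
      linarith
    · have hjn : (j:ℕ) = n := by have := j.isLt; omega
      have hn1 : n - 1 < n := by omega
      set i : Fin n := ⟨n-1, hn1⟩ with hi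
      have hji : i.succ = j := Fin.ext (by simp only [Fin.val_succ, hi]; omega)
      set s : ℝ := (y i.succ - y i.castSucc)/(x i.succ - x i.castSucc) with hs
      have h1 : |b i.succ - s| ≤ Hf x y b :=
        le_trans (coercive2 (hab i)) (hterm b i)
      have h3 := hKb i
      have h5 : |b i.succ| ≤ |b i.succ - s| + |s| := by
        have h6 := abs_add_le (b i.succ - s) s
        simpa using h6
      rw [← hji]
      rw [← hs] at h3
      linarith
  have hnorm : ∀ b : Fin (n+1) → ℝ, ‖b‖ ≤ Hf x y b + K := by
    intro b
    rw [pi_norm_le_iff_of_nonneg (by linarith [hHnn b])]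
    intro j
    rw [Real.norm_eq_abs]
    exact hcoord b j
  have hcont : Continuous (Hf x y) := Hf_cont x y
  have hco : Tendsto (Hf x y) (cocompact _) atTop := by
    apply tendsto_atTop_mono
      (f := fun b : Fin (n+1) → ℝ => ‖b‖ + -K)
      (fun b => by show ‖b‖ + -K ≤ Hf x y b; linarith [hnorm b])
    exact tendsto_atTop_add_const_right _ (-K) tendsto_norm_cocompact_atTop
  constructor
  · intro C
    refine ⟨2*C + 2*K, ?_⟩
    rintro b ⟨i, j, hij⟩
    rw [hsplit b]
    have h1 := hcoord b i
    have h2 := hcoord b j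
    have h3 := le_abs_self (b i)
    have h4 := neg_abs_le (b j)
    linarith
  · obtain ⟨bs, hbs⟩ := hcont.exists_forall_le hco
    exact ⟨bs, fun b => by rw [hsplit, hsplit]; exact hbs b⟩
end
end
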